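/- arXiv:1907.07814 — 3 statements merged into one kernel-verified Lean document; each statement's English description precedes it below -/
import Mathlib

section
/- Let z_0 ≤ z_1 ≤ ⋯ ≤ z_{n−1} be positive integers. Let t_n(x; w, −Z) denote the n-th generalized Gončarov polynomial associated with the zeta-type enumerators a_n(·; w) and the grid −Z = (−z_0, −z_1, …, −z_{n−1}). Then t_n(0; w, −Z) = Σ_{π ∈ Π_n} w(0̂, π) · PF_π(Z). (Theorem 3.5, first expression.) -/
open Finset

variable {R : Type*} [CommRing R] [Algebra ℚ R]

/-- The zeta-type weight `w(0̂, π) = ∏_{B a block of π} w(|B|)`. -/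
noncomputable def zetaWeight (w : ℕ → R) {n : ℕ} (π : Finpartition (univ : Finset (Fin n))) : R :=
  ∏ B ∈ π.parts, w B.card

/-- The zeta-type enumerator `a_n(x; w)`. -/
noncomputable def aEnum (w : ℕ → R) (n : ℕ) (x : R) : R :=
  if n = 0 then 1 else
    ∑ π : Finpartition (univ : Finset (Fin n)), zetaWeight w π * x ^ π.parts.card

/-- `f : Fin n → ℕ` is a `z⃗`-parking function: all entries are positive, and for each
`i < n` at least `i + 1` of the entries are `≤ z i`. -/
def IsParking {n : ℕ} (z : ℕ → ℕ) (f : Fin n → ℕ) : Prop :=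
  (∀ j, 1 ≤ f j) ∧
    ∀ i : Fin n, (i : ℕ) + 1 ≤ (univ.filter fun j => f j ≤ z (i : ℕ)).card

/-- `PF_π(Z)`: the number of labelings of the blocks of `π` by positive integers whose
associated sequence (constant on each block) is a `z⃗`-parking function. -/
noncomputable def PFcount {n : ℕ} (π : Finpartition (univ : Finset (Fin n))) (z : ℕ → ℕ) : ℕ :=
  Nat.card { f : Fin n → ℕ //
    (∀ B ∈ π.parts, ∀ i ∈ B, ∀ j ∈ B, f i = f j) ∧ IsParking z f }

/-- The generalized Gončarov polynomials associated with the sequence `p` and the grid `Z`,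
via the recurrence `t_n(x; Z) = p_n(x) - ∑_{i<n} C(n,i) p_{n-i}(z_i) t_i(x; Z)`
(with `t_0 = p_0 = 1`). -/
noncomputable def gonc {S : Type*} [CommRing S] (p : ℕ → S → S) (Z : ℕ → S) (n : ℕ) (x : S) : S :=
  p n x - ∑ i ∈ (Finset.range n).attach,
    (n.choose i.1 : S) * p (n - i.1) (Z i.1) * gonc p Z i.1 x
termination_by n
decreasing_by exact Finset.mem_range.mp i.2

/-! ### Auxiliary development -/

namespace Gon

variable {γ : Type*} [Fintype γ] [DecidableEq γ]


def isPartOf (s : Finset γ) (P : Finset (Finset γ)) : Prop :=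
  P.SupIndep id ∧ P.sup id = s ∧ ⊥ ∉ P

noncomputable def cand (s : Finset γ) : Finset (Finset (Finset γ)) :=
  @Finset.filter _ (isPartOf s) (Classical.decPred _) Finset.univ

lemma mem_cand {s : Finset γ} {P : Finset (Finset γ)} : P ∈ cand s ↔ isPartOf s P := by
  classical
  simp [cand, Finset.filter_congr_decidable]

lemma sum_parts {M : Type*} [AddCommMonoid M] (s : Finset γ) (g : Finset (Finset γ) → M) :
    ∑ π : Finpartition s, g π.parts = ∑ P ∈ cand s, g P := by
  classical
  apply Finset.sum_bij (fun (π : Finpartition s) _ => π.parts)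
  · intro π _
    rw [mem_cand]
    exact ⟨π.supIndep, π.sup_parts, π.bot_notMem⟩
  · intro π _ π' _ h
    exact Finpartition.ext h
  · intro P hP
    rw [mem_cand] at hP
    exact ⟨⟨P, hP.1, hP.2.1, hP.2.2⟩, mem_univ _, rfl⟩
  · intro π _
    rfl

lemma sum_cand_emb {β : Type*} [Fintype β] [DecidableEq β] (e : β ↪ γ) {s : Finset γ}
    (he : (univ : Finset β).map e = s) {M : Type*} [AddCommMonoid M]
    (g : Finset (Finset γ) → M) (g' : Finset (Finset β) → M)
    (hgg' : ∀ P ∈ cand (univ : Finset β), g' P = g (P.image fun B => B.image e)) :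
    ∑ P ∈ cand (univ : Finset β), g' P = ∑ Q ∈ cand s, g Q := by
  classical
  have hmem : ∀ x : γ, x ∈ s ↔ ∃ a : β, e a = x := by
    intro x
    rw [← he]
    simp [Finset.mem_map]
  apply Finset.sum_nbij' (fun P => P.image fun B => B.image e)
    (fun Q => Q.image fun C => univ.filter (fun a => e a ∈ C))
  · -- forward membership
    intro P hP
    rw [mem_cand] at hP ⊢
    obtain ⟨h1, h2, h3⟩ := hP
    refine ⟨?_, ?_, ?_⟩
    · rw [Finset.supIndep_iff_pairwiseDisjoint]
      intro C₁ hC₁ C₂ hC₂ hne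
      simp only [Finset.coe_image, Set.mem_image, Finset.mem_coe] at hC₁ hC₂
      obtain ⟨B₁, hB₁, rfl⟩ := hC₁
      obtain ⟨B₂, hB₂, rfl⟩ := hC₂
      have hBne : B₁ ≠ B₂ := by rintro rfl; exact hne rfl
      have hd := (Finset.supIndep_iff_pairwiseDisjoint.mp h1) hB₁ hB₂ hBne
      simp only [Function.onFun, id] at hd ⊢
      rw [Finset.disjoint_left] at hd ⊢
      intro x hx₁ hx₂
      rw [Finset.mem_image] at hx₁ hx₂
      obtain ⟨a₁, ha₁, rfl⟩ := hx₁
      obtain ⟨a₂, ha₂, hEq⟩ := hx₂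
      cases e.injective hEq
      exact hd ha₁ ha₂
    · ext x
      rw [Finset.mem_sup, hmem x]
      constructor
      · rintro ⟨C, hC, hx⟩
        rw [Finset.mem_image] at hC
        obtain ⟨B, hB, rfl⟩ := hC
        simp only [id, Finset.mem_image] at hx
        obtain ⟨a, _, rfl⟩ := hx
        exact ⟨a, rfl⟩
      · rintro ⟨a, rfl⟩
        have : a ∈ P.sup id := by rw [h2]; exact mem_univ a
        rw [Finset.mem_sup] at this
        obtain ⟨B, hB, haB⟩ := this
        exact ⟨B.image e, Finset.mem_image_of_mem _ hB, Finset.mem_image_of_mem _ haB⟩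
    · intro hbot
      rw [Finset.mem_image] at hbot
      obtain ⟨B, hB, hBe⟩ := hbot
      rw [show (⊥ : Finset γ) = ∅ from rfl, Finset.image_eq_empty] at hBe
      exact h3 (by rwa [hBe] at hB)
  · -- backward membership
    intro Q hQ
    rw [mem_cand] at hQ ⊢
    obtain ⟨h1, h2, h3⟩ := hQ
    have hsub : ∀ C ∈ Q, ∀ x ∈ C, ∃ a, e a = x := by
      intro C hC x hx
      rw [← hmem x, ← h2, Finset.mem_sup]
      exact ⟨C, hC, hx⟩
    refine ⟨?_, ?_, ?_⟩
    · rw [Finset.supIndep_iff_pairwiseDisjoint]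
      intro B₁ hB₁ B₂ hB₂ hne
      simp only [Finset.coe_image, Set.mem_image, Finset.mem_coe] at hB₁ hB₂
      obtain ⟨C₁, hC₁, rfl⟩ := hB₁
      obtain ⟨C₂, hC₂, rfl⟩ := hB₂
      have hCne : C₁ ≠ C₂ := by rintro rfl; exact hne rfl
      have hd := (Finset.supIndep_iff_pairwiseDisjoint.mp h1) hC₁ hC₂ hCne
      simp only [Function.onFun, id] at hd ⊢
      rw [Finset.disjoint_left] at hd ⊢
      intro a ha₁ ha₂
      simp only [id, Finset.mem_filter] at ha₁ ha₂
      exact hd ha₁.2 ha₂.2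
    · ext a
      simp only [Finset.mem_sup, Finset.mem_univ, iff_true]
      have hea : e a ∈ s := (hmem (e a)).mpr ⟨a, rfl⟩
      rw [← h2, Finset.mem_sup] at hea
      obtain ⟨C, hC, haC⟩ := hea
      exact ⟨univ.filter (fun b => e b ∈ C), Finset.mem_image_of_mem _ hC,
        by simpa using haC⟩
    · intro hbot
      rw [Finset.mem_image] at hbot
      obtain ⟨C, hC, hCe⟩ := hbot
      have hCne : C.Nonempty := Finset.nonempty_iff_ne_empty.mpr (fun h => h3 (by rwa [show (⊥ : Finset γ) = ∅ from rfl, ← h]))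
      obtain ⟨x, hx⟩ := hCne
      obtain ⟨a, rfl⟩ := hsub C hC x hx
      have : a ∈ univ.filter (fun a => e a ∈ C) := by simp [hx]
      rw [hCe] at this
      exact absurd this (Finset.notMem_empty a)
  · -- left inverse
    intro P hP
    rw [Finset.image_image]
    have : ∀ B ∈ P, (Function.comp (fun C => univ.filter (fun a => e a ∈ C))
        (fun B => B.image e)) B = B := by
      intro B _
      ext a
      simp [Function.comp, e.injective.eq_iff]
    calc P.image _ = P.image id := Finset.image_congr (fun B hB => this B hB)
    _ = P := Finset.image_id
  · -- right inverse
    intro Q hQ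
    rw [mem_cand] at hQ
    obtain ⟨h1, h2, h3⟩ := hQ
    have hsub : ∀ C ∈ Q, ∀ x ∈ C, ∃ a, e a = x := by
      intro C hC x hx
      rw [← hmem x, ← h2, Finset.mem_sup]
      exact ⟨C, hC, hx⟩
    rw [Finset.image_image]
    have : ∀ C ∈ Q, (Function.comp (fun B => B.image e)
        (fun C => univ.filter (fun a => e a ∈ C))) C = C := by
      intro C hC
      ext x
      simp only [Function.comp, Finset.mem_image, Finset.mem_filter, Finset.mem_univ, true_and]
      constructor
      · rintro ⟨a, ha, rfl⟩; exact ha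
      · intro hx
        obtain ⟨a, rfl⟩ := hsub C hC x hx
        exact ⟨a, hx, rfl⟩
    calc Q.image _ = Q.image id := Finset.image_congr (fun C hC => this C hC)
    _ = Q := Finset.image_id
  · exact hgg'



/-- Weight of a block set. -/
noncomputable def wp (w : ℕ → R) (P : Finset (Finset γ)) : R := ∏ B ∈ P, w B.card

/-- `f` is constant on each block of `P`. -/
def constOn (P : Finset (Finset γ)) (f : γ → ℕ) : Prop :=
  ∀ B ∈ P, ∀ i ∈ B, ∀ j ∈ B, f i = f j

variable (z : ℕ → ℕ)

/-- parking condition relative to the coordinate set `S`. -/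
def parkOn (S : Finset γ) (f : γ → ℕ) : Prop :=
  ∀ k < S.card, k + 1 ≤ (S.filter fun j => f j ≤ z k).card

def posOn (S : Finset γ) (f : γ → ℕ) : Prop := ∀ j ∈ S, 1 ≤ f j

def zeroOff (S : Finset γ) (f : γ → ℕ) : Prop := ∀ j, j ∉ S → f j = 0

/-- parking count for a partition `P` of `S`, inside the ambient type `γ`. -/
noncomputable def PFS (S : Finset γ) (P : Finset (Finset γ)) : ℕ :=
  Nat.card {f : γ → ℕ // constOn P f ∧ posOn S f ∧ parkOn z S f ∧ zeroOff S f}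

/-- ambient box of functions. -/
noncomputable def Box : Finset (γ → ℕ) :=
  Fintype.piFinset fun _ : γ => Finset.Icc 1 (z (Fintype.card γ - 1))

/-- unmarked coordinates. -/
def SM (M : Finset (Finset γ)) : Finset γ := univ \ M.sup id

/-- validity of a configuration `(T, M, f)`. -/
def Valid (T M : Finset (Finset γ)) (f : γ → ℕ) : Prop :=
  constOn T f ∧ parkOn z (SM M) f ∧ ∀ B ∈ M, ∀ j ∈ B, f j ≤ z ((SM M : Finset γ).card)

noncomputable def NF (T M : Finset (Finset γ)) : ℕ :=
  (@Finset.filter _ (Valid z T M) (Classical.decPred _) (Box z)).card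

/-- the canonical embedding of `Fin k` onto a `k`-element subset. -/
noncomputable def emb (s : Finset γ) [LinearOrder γ] {k : ℕ} (hs : s.card = k) : Fin k ↪ γ :=
  ⟨fun j => (s.orderIsoOfFin hs j : γ),
   fun a b h => (s.orderIsoOfFin hs).injective (Subtype.ext h)⟩

lemma map_emb (s : Finset γ) [LinearOrder γ] {k : ℕ} (hs : s.card = k) :
    (univ : Finset (Fin k)).map (emb s hs) = s := by
  ext x
  simp only [Finset.mem_map, Finset.mem_univ, true_and]
  constructor
  · rintro ⟨j, _, rfl⟩; exact (s.orderIsoOfFin hs j).2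
  · intro hx
    refine ⟨(s.orderIsoOfFin hs).symm ⟨x, hx⟩, ?_⟩
    show ((s.orderIsoOfFin hs) ((s.orderIsoOfFin hs).symm ⟨x, hx⟩) : γ) = x
    rw [OrderIso.apply_symm_apply]

end Gon



namespace Gon

section Transport

variable {γ : Type*} [Fintype γ] [DecidableEq γ] [LinearOrder γ]

lemma emb_mem (s : Finset γ) {k : ℕ} (hs : s.card = k) (j : Fin k) : emb s hs j ∈ s :=
  (s.orderIsoOfFin hs j).2

lemma emb_symm (s : Finset γ) {k : ℕ} (hs : s.card = k) {x : γ} (hx : x ∈ s) :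
    emb s hs ((s.orderIsoOfFin hs).symm ⟨x, hx⟩) = x := by
  show ((s.orderIsoOfFin hs) ((s.orderIsoOfFin hs).symm ⟨x, hx⟩) : γ) = x
  rw [OrderIso.apply_symm_apply]

/-- extension by zero of a function on `Fin k` to a function on `γ` supported on `s`. -/
noncomputable def extendF (s : Finset γ) {k : ℕ} (hs : s.card = k) (f : Fin k → ℕ) : γ → ℕ :=
  fun x => if hx : x ∈ s then f ((s.orderIsoOfFin hs).symm ⟨x, hx⟩) else 0

lemma extendF_emb (s : Finset γ) {k : ℕ} (hs : s.card = k) (f : Fin k → ℕ) (j : Fin k) :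
    extendF s hs f (emb s hs j) = f j := by
  have h : emb s hs j ∈ s := emb_mem s hs j
  rw [extendF, dif_pos h]
  congr 1
  apply (s.orderIsoOfFin hs).injective
  rw [OrderIso.apply_symm_apply]
  rfl

lemma countF (s : Finset γ) {k : ℕ} (hs : s.card = k) (g : γ → ℕ) (c : ℕ) :
    (univ.filter fun j : Fin k => g (emb s hs j) ≤ c).card
      = (s.filter fun x => g x ≤ c).card := by
  apply Finset.card_bij (fun j _ => emb s hs j)
  · intro j hj
    rw [Finset.mem_filter] at hj ⊢
    exact ⟨emb_mem s hs j, hj.2⟩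
  · intro a _ b _ h
    exact (emb s hs).injective h
  · intro x hx
    rw [Finset.mem_filter] at hx
    refine ⟨(s.orderIsoOfFin hs).symm ⟨x, hx.1⟩, ?_, emb_symm s hs hx.1⟩
    rw [Finset.mem_filter]
    refine ⟨Finset.mem_univ _, ?_⟩
    rw [emb_symm s hs hx.1]
    exact hx.2

lemma pf_transport (z : ℕ → ℕ) {k : ℕ} (s : Finset γ) (hs : s.card = k)
    (P : Finset (Finset (Fin k))) :
    Nat.card {f : Fin k → ℕ // (∀ B ∈ P, ∀ i ∈ B, ∀ j ∈ B, f i = f j) ∧ IsParking z f}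
      = PFS z s (P.image fun B => B.image (emb s hs)) := by
  apply Nat.card_congr
  have fwd : ∀ f : Fin k → ℕ, ((∀ B ∈ P, ∀ i ∈ B, ∀ j ∈ B, f i = f j) ∧ IsParking z f) →
      constOn (P.image fun B => B.image (emb s hs)) (extendF s hs f) ∧
      posOn s (extendF s hs f) ∧ parkOn z s (extendF s hs f) ∧ zeroOff s (extendF s hs f) := by
    intro f hf
    refine ⟨?_, ?_, ?_, ?_⟩
    · intro C hC x hx y hy
      rw [Finset.mem_image] at hC
      obtain ⟨B, hB, rfl⟩ := hC
      rw [Finset.mem_image] at hx hy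
      obtain ⟨a, ha, rfl⟩ := hx
      obtain ⟨b, hb, rfl⟩ := hy
      rw [extendF_emb, extendF_emb]
      exact hf.1 B hB a ha b hb
    · intro x hx
      obtain ⟨j, _, rfl⟩ := Finset.mem_map.mp ((map_emb s hs).symm ▸ hx)
      rw [extendF_emb]
      exact hf.2.1 j
    · intro c hc
      rw [hs] at hc
      have h2 := hf.2.2 ⟨c, hc⟩
      rw [← countF s hs (extendF s hs f) (z c)]
      refine le_trans h2 (le_of_eq ?_)
      congr 1
      apply Finset.filter_congr
      intro j _
      rw [extendF_emb]
    · intro x hx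
      rw [extendF, dif_neg hx]
  have bwd : ∀ g : γ → ℕ, (constOn (P.image fun B => B.image (emb s hs)) g ∧
      posOn s g ∧ parkOn z s g ∧ zeroOff s g) →
      ((∀ B ∈ P, ∀ i ∈ B, ∀ j ∈ B, (g ∘ emb s hs) i = (g ∘ emb s hs) j) ∧
        IsParking z (g ∘ emb s hs)) := by
    intro g hg
    refine ⟨?_, ?_, ?_⟩
    · intro B hB a ha b hb
      exact hg.1 (B.image (emb s hs)) (Finset.mem_image_of_mem _ hB)
        _ (Finset.mem_image_of_mem _ ha) _ (Finset.mem_image_of_mem _ hb)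
    · intro j
      exact hg.2.1 _ (emb_mem s hs j)
    · intro i
      have hi : (i : ℕ) < s.card := by rw [hs]; exact i.2
      have := hg.2.2.1 (i : ℕ) hi
      rw [← countF s hs g (z (i : ℕ))] at this
      exact this
  refine ⟨fun f => ⟨extendF s hs f.1, fwd f.1 f.2⟩,
    fun g => ⟨g.1 ∘ emb s hs, bwd g.1 g.2⟩, ?_, ?_⟩
  · rintro ⟨f, hf⟩
    apply Subtype.ext
    funext j
    exact extendF_emb s hs f j
  · rintro ⟨g, hg⟩
    apply Subtype.ext
    funext x
    by_cases hx : x ∈ s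
    · show extendF s hs (g ∘ emb s hs) x = g x
      rw [extendF, dif_pos hx]
      show g (emb s hs _) = g x
      rw [emb_symm s hs hx]
    · show extendF s hs (g ∘ emb s hs) x = g x
      rw [extendF, dif_neg hx, hg.2.2.2 x hx]

end Transport

end Gon


section Glue

open Gon

variable {R : Type*} [CommRing R] [Algebra ℚ R]
variable {γ : Type*} [Fintype γ] [DecidableEq γ] [LinearOrder γ]

lemma cand_empty : cand (∅ : Finset γ) = {∅} := by
  ext P
  rw [mem_cand, Finset.mem_singleton]
  constructor
  · rintro ⟨h1, h2, h3⟩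
    rw [Finset.eq_empty_iff_forall_notMem]
    intro B hB
    have hBe : B = ∅ := by
      rw [← Finset.subset_empty]
      intro x hx
      rw [← h2]
      exact Finset.mem_sup.mpr ⟨B, hB, hx⟩
    exact h3 (by rwa [hBe] at hB)
  · rintro rfl
    refine ⟨by simp [Finset.supIndep_iff_pairwiseDisjoint], by simp, by simp⟩

lemma wp_image_emb (w : ℕ → R) {k : ℕ} (s : Finset γ) (hs : s.card = k)
    (P : Finset (Finset (Fin k))) :
    wp w (P.image fun B => B.image (emb s hs)) = wp w P := by
  have hinj := Finset.image_injective (emb s hs).injective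
  rw [wp, Finset.prod_image (fun a _ b _ h => hinj h)]
  apply Finset.prod_congr rfl
  intro B _
  rw [Finset.card_image_of_injective _ (emb s hs).injective]

lemma card_image_emb {k : ℕ} (s : Finset γ) (hs : s.card = k)
    (P : Finset (Finset (Fin k))) :
    (P.image fun B => B.image (emb s hs)).card = P.card :=
  Finset.card_image_of_injective _ (Finset.image_injective (emb s hs).injective)

lemma aEnum_eq {k : ℕ} (w : ℕ → R) (x : R) (s : Finset γ) (hs : s.card = k) :
    aEnum w k x = ∑ P ∈ cand s, wp w P * x ^ P.card := by
  rcases Nat.eq_zero_or_pos k with hk | hk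
  · subst hk
    have : s = ∅ := Finset.card_eq_zero.mp hs
    subst this
    rw [cand_empty]
    simp [aEnum, wp]
  · calc aEnum w k x
        = ∑ π : Finpartition (univ : Finset (Fin k)), zetaWeight w π * x ^ π.parts.card := by
          rw [aEnum, if_neg hk.ne']
      _ = ∑ P ∈ cand (univ : Finset (Fin k)), wp w P * x ^ P.card :=
          sum_parts (univ : Finset (Fin k)) (fun P => wp w P * x ^ P.card)
      _ = ∑ Q ∈ cand s, wp w Q * x ^ Q.card := by
          apply sum_cand_emb (emb s hs) (map_emb s hs)
          intro P _
          rw [wp_image_emb, card_image_emb]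

/-- the partition-sum of parking counts. -/
noncomputable def NN (w : ℕ → R) (z : ℕ → ℕ) (i : ℕ) : R :=
  ∑ σ : Finpartition (univ : Finset (Fin i)), zetaWeight w σ * (PFcount σ z : R)

lemma NN_eq {k : ℕ} (w : ℕ → R) (z : ℕ → ℕ) (s : Finset γ) (hs : s.card = k) :
    NN w z k = ∑ P ∈ cand s, wp w P * (PFS z s P : R) := by
  calc NN w z k
      = ∑ P ∈ cand (univ : Finset (Fin k)), wp w P *
        (Nat.card {f : Fin k → ℕ //
          (∀ B ∈ P, ∀ i ∈ B, ∀ j ∈ B, f i = f j) ∧ IsParking z f} : R) :=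
        sum_parts (univ : Finset (Fin k)) (fun P => wp w P * (Nat.card {f : Fin k → ℕ //
          (∀ B ∈ P, ∀ i ∈ B, ∀ j ∈ B, f i = f j) ∧ IsParking z f} : R))
    _ = ∑ P ∈ cand s, wp w P * (PFS z s P : R) := by
        apply sum_cand_emb (emb s hs) (map_emb s hs)
        intro P _
        rw [wp_image_emb, pf_transport z s hs P]

/-- per-subset summand. -/
noncomputable def GG (w : ℕ → R) (z : ℕ → ℕ) {n : ℕ} (S : Finset (Fin n)) : R :=
  (∑ P ∈ cand S, wp w P * (PFS z S P : R)) *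
  (∑ Q ∈ cand ((univ : Finset (Fin n)) \ S), wp w Q * (-(z S.card : R)) ^ Q.card)

lemma step1 (w : ℕ → R) (z : ℕ → ℕ) {n i : ℕ} (hi : i ≤ n) :
    (n.choose i : R) * (aEnum w (n - i) (-(z i : R)) * NN w z i)
      = ∑ S ∈ powersetCard i (univ : Finset (Fin n)), GG w z S := by
  have hconst : ∀ S ∈ powersetCard i (univ : Finset (Fin n)),
      GG w z S = NN w z i * aEnum w (n - i) (-(z i : R)) := by
    intro S hS
    have hcard : S.card = i := (Finset.mem_powersetCard.mp hS).2
    have hcard' : ((univ : Finset (Fin n)) \ S).card = n - i := by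
      rw [Finset.card_sdiff_of_subset (Finset.subset_univ S), Finset.card_univ, Fintype.card_fin, hcard]
    rw [GG, ← NN_eq w z S hcard, hcard, ← aEnum_eq w _ _ hcard']
  rw [Finset.sum_congr rfl hconst, Finset.sum_const, Finset.card_powersetCard,
    Finset.card_univ, Fintype.card_fin, nsmul_eq_mul]
  ring

end Glue


namespace Gon

section Counting

variable {γ : Type*} [Fintype γ] [DecidableEq γ]

/-- the block of `Q` containing `x` (junk value if none). -/
def blk (Q : Finset (Finset γ)) (x : γ) : Finset γ := (Q.filter fun B => x ∈ B).sup id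

lemma blk_eq {Q : Finset (Finset γ)} (h : Q.SupIndep id) {B : Finset γ} {x : γ}
    (hB : B ∈ Q) (hx : x ∈ B) : blk Q x = B := by
  have hfil : Q.filter (fun C => x ∈ C) = {B} := by
    ext C
    rw [Finset.mem_filter, Finset.mem_singleton]
    constructor
    · rintro ⟨hC, hxC⟩
      by_contra hne
      have hd := (Finset.supIndep_iff_pairwiseDisjoint.mp h) hC hB hne
      simp only [Function.onFun, id] at hd
      exact (Finset.disjoint_left.mp hd) hxC hx
    · rintro rfl
      exact ⟨hB, hx⟩
  rw [blk, hfil, Finset.sup_singleton]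
  rfl

lemma blk_mem {Q : Finset (Finset γ)} (h : Q.SupIndep id) {x : γ} (hx : x ∈ Q.sup id) :
    blk Q x ∈ Q ∧ x ∈ blk Q x := by
  rw [Finset.mem_sup] at hx
  obtain ⟨B, hB, hxB⟩ := hx
  rw [blk_eq h hB hxB]
  exact ⟨hB, hxB⟩

variable (z : ℕ → ℕ)

lemma park_bound {S : Finset γ} {f : γ → ℕ} (hpark : parkOn z S f) {x : γ} (hx : x ∈ S) :
    f x ≤ z (S.card - 1) := by
  have hS : 0 < S.card := Finset.card_pos.mpr ⟨x, hx⟩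
  have h := hpark (S.card - 1) (by omega)
  have heq : S.filter (fun j => f j ≤ z (S.card - 1)) = S :=
    Finset.eq_of_subset_of_card_le (Finset.filter_subset _ _) (by omega)
  have : x ∈ S.filter (fun j => f j ≤ z (S.card - 1)) := heq.symm ▸ hx
  exact (Finset.mem_filter.mp this).2

lemma PFS_card (hm : ∀ i j, i ≤ j → j < Fintype.card γ → z i ≤ z j)
    {S : Finset γ} (P : Finset (Finset γ)) :
    PFS z S P = (@Finset.filter _ (fun g => constOn P g ∧ parkOn z S g) (Classical.decPred _)
      (Fintype.piFinset fun x : γ =>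
        if x ∈ S then Finset.Icc 1 (z (Fintype.card γ - 1)) else ({0} : Finset ℕ))).card := by
  classical
  rw [Finset.filter_congr_decidable, ← Nat.card_eq_finsetCard, PFS]
  apply Nat.card_congr
  apply Equiv.subtypeEquivRight
  intro g
  rw [Finset.mem_filter, Fintype.mem_piFinset]
  constructor
  · rintro ⟨h1, h2, h3, h4⟩
    refine ⟨?_, h1, h3⟩
    intro x
    by_cases hx : x ∈ S
    · rw [if_pos hx, Finset.mem_Icc]
      have hb := park_bound z h3 hx
      have hcard : S.card ≤ Fintype.card γ := Finset.card_le_univ S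
      have hN : 0 < Fintype.card γ := Fintype.card_pos_iff.mpr ⟨x⟩
      exact ⟨h2 x hx, le_trans hb (hm _ _ (by omega) (by omega))⟩
    · rw [if_neg hx, Finset.mem_singleton]
      exact h4 x hx
  · rintro ⟨h0, h1, h3⟩
    refine ⟨h1, ?_, h3, ?_⟩
    · intro x hx
      have := h0 x
      rw [if_pos hx, Finset.mem_Icc] at this
      exact this.1
    · intro x hx
      have := h0 x
      rwa [if_neg hx, Finset.mem_singleton] at this

end Counting

end Gon


namespace Gon

section Merge

variable {γ : Type*} [Fintype γ] [DecidableEq γ] (z : ℕ → ℕ)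

lemma count_merge (hm : ∀ i j, i ≤ j → j < Fintype.card γ → z i ≤ z j)
    {S : Finset γ} {P Q : Finset (Finset γ)}
    (hP : isPartOf S P) (hQ : isPartOf ((univ : Finset γ) \ S) Q) :
    PFS z S P * (z S.card) ^ Q.card = NF z (P ∪ Q) Q := by
  classical
  have hQsup : Q.sup id = univ \ S := hQ.2.1
  have hSM : SM Q = S := by
    rw [SM, hQsup, Finset.sdiff_sdiff_eq_self (Finset.subset_univ S)]
  have hPsub : ∀ B ∈ P, ∀ x ∈ B, x ∈ S := by
    intro B hB x hx
    rw [← hP.2.1]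
    exact Finset.mem_sup.mpr ⟨B, hB, hx⟩
  have hQsub : ∀ B ∈ Q, ∀ x ∈ B, x ∉ S := by
    intro B hB x hx
    have : x ∈ univ \ S := by
      rw [← hQsup]
      exact Finset.mem_sup.mpr ⟨B, hB, hx⟩
    exact (Finset.mem_sdiff.mp this).2
  have hbound2 : ∀ x : γ, x ∉ S → z S.card ≤ z (Fintype.card γ - 1) := by
    intro x hx
    have hlt : S.card < Fintype.card γ := by
      rw [← Finset.card_univ]
      apply Finset.card_lt_card
      rw [Finset.ssubset_univ_iff]
      intro h
      exact hx (h ▸ Finset.mem_univ x)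
    have hN : 0 < Fintype.card γ := Fintype.card_pos_iff.mpr ⟨x⟩
    exact hm _ _ (by omega) (by omega)
  have hblk : ∀ x : γ, x ∉ S → blk Q x ∈ Q ∧ x ∈ blk Q x := by
    intro x hx
    apply blk_mem hQ.1
    rw [hQsup]
    exact Finset.mem_sdiff.mpr ⟨Finset.mem_univ x, hx⟩
  set Gset := @Finset.filter _ (fun g => constOn P g ∧ parkOn z S g) (Classical.decPred _)
      (Fintype.piFinset fun x : γ =>
        if x ∈ S then Finset.Icc 1 (z (Fintype.card γ - 1)) else ({0} : Finset ℕ)) with hGset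
  set Hrep := (Fintype.piFinset fun B : Finset γ =>
      if B ∈ Q then Finset.Icc 1 (z S.card) else ({0} : Finset ℕ)) with hHrep
  have hA : (z S.card) ^ Q.card = Hrep.card := by
    rw [hHrep, Fintype.card_piFinset]
    have : ∀ B : Finset γ,
        ((if B ∈ Q then Finset.Icc 1 (z S.card) else ({0} : Finset ℕ))).card
          = if B ∈ Q then z S.card else 1 := by
      intro B
      by_cases hB : B ∈ Q
      · rw [if_pos hB, if_pos hB, Nat.card_Icc]
        omega
      · rw [if_neg hB, if_neg hB, Finset.card_singleton]
    rw [Finset.prod_congr rfl (fun B _ => this B), Finset.prod_ite_mem,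
      Finset.univ_inter, Finset.prod_const]
  have hPFS : PFS z S P = Gset.card := PFS_card z hm P
  rw [hPFS, hA, ← Finset.card_product]
  rw [show NF z (P ∪ Q) Q = (@Finset.filter _ (Valid z (P ∪ Q) Q) (Classical.decPred _)
    (Box z)).card from rfl]
  apply Finset.card_nbij' (fun gh x => if x ∈ S then gh.1 x else gh.2 (blk Q x))
    (fun f => (fun x => if x ∈ S then f x else 0, fun B => if B ∈ Q then B.sup f else 0))
  · -- forward membership
    rintro ⟨g, h⟩ hgh
    dsimp only
    rw [Finset.mem_coe, Finset.mem_product] at hgh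
    obtain ⟨hg, hh⟩ := hgh
    rw [hGset, Finset.filter_congr_decidable, Finset.mem_filter] at hg
    obtain ⟨hgpi, hgc, hgp⟩ := hg
    rw [Fintype.mem_piFinset] at hgpi
    rw [hHrep, Fintype.mem_piFinset] at hh
    rw [Finset.mem_coe, Finset.filter_congr_decidable, Finset.mem_filter]
    constructor
    · -- in Box
      rw [Box, Fintype.mem_piFinset]
      intro x
      by_cases hx : x ∈ S
      · rw [if_pos hx]
        have := hgpi x
        rwa [if_pos hx] at this
      · rw [if_neg hx]
        have hb := hblk x hx
        have := hh (blk Q x)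
        rw [if_pos hb.1, Finset.mem_Icc] at this
        rw [Finset.mem_Icc]
        exact ⟨this.1, le_trans this.2 (hbound2 x hx)⟩
    · refine ⟨?_, ?_, ?_⟩
      · -- constOn (P ∪ Q)
        intro B hB x hx y hy
        beta_reduce
        rcases Finset.mem_union.mp hB with hBP | hBQ
        · rw [if_pos (hPsub B hBP x hx), if_pos (hPsub B hBP y hy)]
          exact hgc B hBP x hx y hy
        · rw [if_neg (hQsub B hBQ x hx), if_neg (hQsub B hBQ y hy),
            blk_eq hQ.1 hBQ hx, blk_eq hQ.1 hBQ hy]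
      · -- parkOn
        rw [hSM]
        intro k hk
        have := hgp k hk
        refine le_trans this (le_of_eq ?_)
        congr 1
        apply Finset.filter_congr
        intro x hx
        beta_reduce
        rw [if_pos hx]
      · -- bound on marked blocks
        intro B hB j hj
        beta_reduce
        rw [if_neg (hQsub B hB j hj), blk_eq hQ.1 hB hj, hSM]
        have := hh B
        rw [if_pos hB, Finset.mem_Icc] at this
        exact this.2
  · -- backward membership
    intro f hf
    dsimp only
    rw [Finset.mem_coe, Finset.filter_congr_decidable, Finset.mem_filter] at hf
    obtain ⟨hfB, hfc, hfp, hfb⟩ := hf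
    rw [Box, Fintype.mem_piFinset] at hfB
    rw [Finset.mem_coe, Finset.mem_product]
    constructor
    · rw [hGset, Finset.filter_congr_decidable, Finset.mem_filter]
      refine ⟨?_, ?_, ?_⟩
      · rw [Fintype.mem_piFinset]
        intro x
        dsimp only
        by_cases hx : x ∈ S
        · rw [if_pos hx, if_pos hx]
          exact hfB x
        · rw [if_neg hx, if_neg hx]
          exact Finset.mem_singleton_self 0
      · intro B hB x hx y hy
        dsimp only
        rw [if_pos (hPsub B hB x hx), if_pos (hPsub B hB y hy)]
        exact hfc B (Finset.mem_union_left _ hB) x hx y hy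
      · intro k hk
        have := hfp k (by rwa [hSM])
        rw [hSM] at this
        refine le_trans this (le_of_eq ?_)
        congr 1
        apply Finset.filter_congr
        intro x hx
        dsimp only
        rw [if_pos hx]
    · rw [hHrep, Fintype.mem_piFinset]
      intro B
      dsimp only
      by_cases hB : B ∈ Q
      · rw [if_pos hB, if_pos hB]
        have hBne : B.Nonempty := by
          rw [Finset.nonempty_iff_ne_empty]
          intro h
          exact hQ.2.2 (by rw [show (⊥ : Finset γ) = ∅ from rfl, ← h]; exact hB)
        obtain ⟨j, hj, hsup⟩ := Finset.exists_mem_eq_sup B hBne f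
        rw [hsup, Finset.mem_Icc]
        have h1 := hfB j
        rw [Finset.mem_Icc] at h1
        have h2 := hfb B hB j hj
        rw [hSM] at h2
        exact ⟨h1.1, h2⟩
      · rw [if_neg hB, if_neg hB]
        exact Finset.mem_singleton_self 0
  · -- left inverse
    rintro ⟨g, h⟩ hgh
    dsimp only
    rw [Finset.mem_coe, Finset.mem_product] at hgh
    obtain ⟨hg, hh⟩ := hgh
    rw [hGset, Finset.filter_congr_decidable, Finset.mem_filter] at hg
    obtain ⟨hgpi, -, -⟩ := hg
    rw [Fintype.mem_piFinset] at hgpi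
    rw [hHrep, Fintype.mem_piFinset] at hh
    have h1 : (fun x => if x ∈ S then (if x ∈ S then g x else h (blk Q x)) else 0) = g := by
      funext x
      by_cases hx : x ∈ S
      · rw [if_pos hx, if_pos hx]
      · rw [if_neg hx]
        have := hgpi x
        rw [if_neg hx, Finset.mem_singleton] at this
        exact this.symm
    have h2 : (fun B => if B ∈ Q then
        B.sup (fun x => if x ∈ S then g x else h (blk Q x)) else 0) = h := by
      funext B
      by_cases hB : B ∈ Q
      · rw [if_pos hB]
        have hBne : B.Nonempty := by
          rw [Finset.nonempty_iff_ne_empty]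
          intro hempty
          exact hQ.2.2 (by rw [show (⊥ : Finset γ) = ∅ from rfl, ← hempty]; exact hB)
        have : ∀ x ∈ B, (if x ∈ S then g x else h (blk Q x)) = h B := by
          intro x hx
          rw [if_neg (hQsub B hB x hx), blk_eq hQ.1 hB hx]
        rw [Finset.sup_congr rfl this, Finset.sup_const hBne]
      · rw [if_neg hB]
        have := hh B
        rw [if_neg hB, Finset.mem_singleton] at this
        exact this.symm
    exact Prod.ext h1 h2
  · -- right inverse
    intro f hf
    dsimp only
    rw [Finset.mem_coe, Finset.filter_congr_decidable, Finset.mem_filter] at hf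
    obtain ⟨-, hfc, -, -⟩ := hf
    funext x
    beta_reduce
    by_cases hx : x ∈ S
    · simp only [if_pos hx]
    · simp only [if_neg hx]
      have hb := hblk x hx
      rw [if_pos hb.1]
      have : ∀ y ∈ blk Q x, f y = f x :=
        fun y hy => hfc (blk Q x) (Finset.mem_union_right _ hb.1) y hy x hb.2
      rw [Finset.sup_congr rfl this, Finset.sup_const ⟨x, hb.2⟩]

end Merge

end Gon


namespace Gon

section Invol

variable {n : ℕ} (z : ℕ → ℕ)

private lemma nat_key_le {m a b r s : ℕ} (hr : r < m) (hs : s < m)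
    (h : m * a + r ≤ m * b + s) : a ≤ b := by
  by_contra hab
  push_neg at hab
  have h2 : m * (b + 1) ≤ m * a := Nat.mul_le_mul_left m hab
  rw [Nat.mul_succ] at h2
  omega

private lemma nat_key_eq {m a b r s : ℕ} (hr : r < m) (hs : s < m)
    (h : m * a + r = m * b + s) : a = b ∧ r = s := by
  have h1 : a ≤ b := nat_key_le hr hs h.le
  have h2 : b ≤ a := nat_key_le hs hr h.ge
  have : a = b := le_antisymm h1 h2
  subst this
  omega

/-- sorting key for blocks: value first, then largest element. -/
def keyFn (f : Fin n → ℕ) (B : Finset (Fin n)) : ℕ :=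
  (n + 1) * B.sup f + B.sup (fun x => (x : ℕ))

/-- the block of `T` with maximal key. -/
noncomputable def best (T : Finset (Finset (Fin n))) (f : Fin n → ℕ) : Finset (Fin n) :=
  if h : ∃ B, B ∈ T ∧ keyFn f B = T.sup (keyFn f) then Classical.choose h else ∅

lemma best_spec {T : Finset (Finset (Fin n))} (hT : T.Nonempty) (f : Fin n → ℕ) :
    best T f ∈ T ∧ keyFn f (best T f) = T.sup (keyFn f) := by
  obtain ⟨B, hB, hkey⟩ := Finset.exists_mem_eq_sup T hT (keyFn f)
  have h : ∃ B, B ∈ T ∧ keyFn f B = T.sup (keyFn f) := ⟨B, hB, hkey.symm⟩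
  rw [best, dif_pos h]
  exact Classical.choose_spec h

lemma best_mem {T : Finset (Finset (Fin n))} (hT : T.Nonempty) (f : Fin n → ℕ) :
    best T f ∈ T := (best_spec hT f).1

lemma best_max {T : Finset (Finset (Fin n))} (hT : T.Nonempty) (f : Fin n → ℕ)
    {B : Finset (Fin n)} (hB : B ∈ T) : keyFn f B ≤ keyFn f (best T f) := by
  rw [(best_spec hT f).2]
  exact Finset.le_sup hB

lemma idx_sup_lt {B : Finset (Fin n)} (hB : B.Nonempty) :
    B.sup (fun x => (x : ℕ)) < n + 1 := by
  obtain ⟨x, hx, hsup⟩ := Finset.exists_mem_eq_sup B hB (fun x => (x : ℕ))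
  rw [hsup]
  have := x.2
  omega

/-- on blocks of a partition the maximal block dominates all values. -/
lemma sup_le_best {T : Finset (Finset (Fin n))} (hT : isPartOf univ T)
    (hTne : T.Nonempty) (f : Fin n → ℕ) {B : Finset (Fin n)} (hB : B ∈ T) :
    B.sup f ≤ (best T f).sup f := by
  have hBne : B.Nonempty := by
    rw [Finset.nonempty_iff_ne_empty]
    intro h
    exact hT.2.2 (by rw [show (⊥ : Finset (Fin n)) = ∅ from rfl, ← h]; exact hB)
  have hbne : (best T f).Nonempty := by
    rw [Finset.nonempty_iff_ne_empty]
    intro h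
    exact hT.2.2 (by rw [show (⊥ : Finset (Fin n)) = ∅ from rfl, ← h]; exact best_mem hTne f)
  have := best_max hTne f hB
  rw [keyFn, keyFn] at this
  exact nat_key_le (idx_sup_lt hBne) (idx_sup_lt hbne) this

lemma f_le_best {T : Finset (Finset (Fin n))} (hT : isPartOf univ T)
    (hTne : T.Nonempty) (f : Fin n → ℕ) (x : Fin n) :
    f x ≤ (best T f).sup f := by
  have hx : x ∈ T.sup id := by rw [hT.2.1]; exact Finset.mem_univ x
  rw [Finset.mem_sup] at hx
  obtain ⟨B, hB, hxB⟩ := hx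
  exact le_trans (Finset.le_sup hxB) (sup_le_best hT hTne f hB)

/-- values of a function constant on a block equal the block sup. -/
lemma constOn_eq_sup {T : Finset (Finset (Fin n))} {f : Fin n → ℕ}
    (hc : constOn T f) {B : Finset (Fin n)} (hB : B ∈ T) (hBne : B.Nonempty)
    {x : Fin n} (hx : x ∈ B) : f x = B.sup f := by
  obtain ⟨y, hy, hsup⟩ := Finset.exists_mem_eq_sup B hBne f
  rw [hsup]
  exact hc B hB x hx y hy

lemma SM_insert (M : Finset (Finset (Fin n))) (B : Finset (Fin n)) :
    SM (insert B M) = SM M \ B := by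
  ext x
  simp only [SM, Finset.mem_sdiff, Finset.mem_univ, true_and, Finset.mem_sup,
    Finset.mem_insert]
  constructor
  · intro h
    constructor
    · intro ⟨C, hC, hxC⟩
      exact h ⟨C, Or.inr hC, hxC⟩
    · intro hxB
      exact h ⟨B, Or.inl rfl, hxB⟩
  · rintro ⟨h1, h2⟩ ⟨C, hC, hxC⟩
    rcases hC with rfl | hC
    · exact h2 hxC
    · exact h1 ⟨C, hC, hxC⟩

/-- an unmarked block is contained in the unmarked set. -/
lemma block_subset_SM {T M : Finset (Finset (Fin n))} (hT : isPartOf univ T)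
    (hM : M ⊆ T) {B : Finset (Fin n)} (hB : B ∈ T) (hBM : B ∉ M) : B ⊆ SM M := by
  intro x hx
  rw [SM, Finset.mem_sdiff]
  refine ⟨Finset.mem_univ x, ?_⟩
  rw [Finset.mem_sup]
  rintro ⟨C, hC, hxC⟩
  have hne : C ≠ B := fun h => hBM (h ▸ hC)
  have hd := (Finset.supIndep_iff_pairwiseDisjoint.mp hT.1) (hM hC) hB hne
  simp only [Function.onFun, id] at hd
  exact (Finset.disjoint_left.mp hd) hxC hx

lemma filter_card_split {S B : Finset (Fin n)} (hB : B ⊆ S) (p : Fin n → Prop)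
    [DecidablePred p] :
    (S.filter p).card = ((S \ B).filter p).card + (B.filter p).card := by
  conv_lhs => rw [← Finset.sdiff_union_of_subset hB]
  rw [Finset.filter_union]
  exact Finset.card_union_of_disjoint
    (Finset.disjoint_filter_filter Finset.sdiff_disjoint)

end Invol

end Gon


namespace Gon

section Claims

variable {n : ℕ} (z : ℕ → ℕ)

lemma T_nonempty (hn : 0 < n) {T : Finset (Finset (Fin n))} (hT : isPartOf univ T) :
    T.Nonempty := by
  rw [Finset.nonempty_iff_ne_empty]
  intro h
  have huniv : (univ : Finset (Fin n)) = ∅ := by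
    rw [← hT.2.1, h, Finset.sup_empty]
    rfl
  haveI : Nonempty (Fin n) := ⟨⟨0, hn⟩⟩
  exact Finset.univ_nonempty.ne_empty huniv

lemma block_nonempty {T : Finset (Finset (Fin n))} (hT : isPartOf univ T)
    {B : Finset (Fin n)} (hB : B ∈ T) : B.Nonempty := by
  rw [Finset.nonempty_iff_ne_empty]
  intro h
  exact hT.2.2 (by rw [show (⊥ : Finset (Fin n)) = ∅ from rfl, ← h]; exact hB)

lemma claimA (hn : 0 < n) (hm : ∀ i j, i ≤ j → j < n → z i ≤ z j)
    {T M : Finset (Finset (Fin n))} (hT : isPartOf univ T) (hM : M ⊆ T)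
    {f : Fin n → ℕ} (hv : Valid z T M f) (hB : best T f ∉ M) :
    Valid z T (insert (best T f) M) f := by
  classical
  have hTne : T.Nonempty := T_nonempty hn hT
  have hBmem : best T f ∈ T := best_mem hTne f
  have hBne : (best T f).Nonempty := block_nonempty hT hBmem
  have hfv : ∀ x ∈ best T f, f x = (best T f).sup f :=
    fun x hx => constOn_eq_sup hv.1 hBmem hBne hx
  have hfle : ∀ x, f x ≤ (best T f).sup f := f_le_best hT hTne f
  have hBS : best T f ⊆ SM M := block_subset_SM hT hM hBmem hB
  have hb1 : 1 ≤ (best T f).card := Finset.card_pos.mpr hBne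
  have hbi : (best T f).card ≤ (SM M).card := Finset.card_le_card hBS
  have hSins : SM (insert (best T f) M) = SM M \ best T f := SM_insert M (best T f)
  have hci : (SM M \ best T f).card = (SM M).card - (best T f).card :=
    Finset.card_sdiff_of_subset hBS
  have hstar : (best T f).sup f ≤ z ((SM M).card - (best T f).card) := by
    by_contra hgt
    push_neg at hgt
    have hpark := hv.2.1 ((SM M).card - (best T f).card) (by omega)
    have hsub : (SM M).filter (fun j => f j ≤ z ((SM M).card - (best T f).card))
        ⊆ SM M \ best T f := by
      intro x hx
      rw [Finset.mem_filter] at hx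
      rw [Finset.mem_sdiff]
      refine ⟨hx.1, fun hxB => ?_⟩
      have := hx.2
      rw [hfv x hxB] at this
      omega
    have := Finset.card_le_card hsub
    omega
  refine ⟨hv.1, ?_, ?_⟩
  · rw [hSins]
    intro k hk
    rw [hci] at hk
    by_cases hcase : (best T f).sup f ≤ z k
    · have heq : (SM M \ best T f).filter (fun j => f j ≤ z k) = SM M \ best T f :=
        Finset.filter_true_of_mem (fun x _ => le_trans (hfle x) hcase)
      rw [heq, hci]
      omega
    · push_neg at hcase
      have hsplit := filter_card_split hBS (fun j => f j ≤ z k)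
      have hBf : (best T f).filter (fun j => f j ≤ z k) = ∅ := by
        rw [Finset.filter_eq_empty_iff]
        intro x hx
        rw [hfv x hx]
        omega
      have hpark := hv.2.1 k (by omega)
      rw [hBf, Finset.card_empty] at hsplit
      omega
  · intro B hBm j hj
    rw [hSins, hci]
    rcases Finset.mem_insert.mp hBm with rfl | hBm'
    · rw [hfv j hj]
      exact hstar
    · exact le_trans (hfle j) hstar

lemma claimB (hn : 0 < n) (hm : ∀ i j, i ≤ j → j < n → z i ≤ z j)
    {T M : Finset (Finset (Fin n))} (hT : isPartOf univ T) (hM : M ⊆ T)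
    {f : Fin n → ℕ} (hv : Valid z T M f) (hB : best T f ∈ M) :
    Valid z T (M.erase (best T f)) f := by
  classical
  have hTne : T.Nonempty := T_nonempty hn hT
  have hBmem : best T f ∈ T := best_mem hTne f
  have hBne : (best T f).Nonempty := block_nonempty hT hBmem
  have hfv : ∀ x ∈ best T f, f x = (best T f).sup f :=
    fun x hx => constOn_eq_sup hv.1 hBmem hBne hx
  have hfle : ∀ x, f x ≤ (best T f).sup f := f_le_best hT hTne f
  have hM' : M.erase (best T f) ⊆ T := le_trans (Finset.erase_subset _ _) hM
  have hBS : best T f ⊆ SM (M.erase (best T f)) :=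
    block_subset_SM hT hM' hBmem (Finset.notMem_erase _ _)
  have hMi : insert (best T f) (M.erase (best T f)) = M := Finset.insert_erase hB
  have hSrel : SM M = SM (M.erase (best T f)) \ best T f := by
    rw [← hMi, SM_insert, hMi]
  have hb1 : 1 ≤ (best T f).card := Finset.card_pos.mpr hBne
  have hbi : (best T f).card ≤ (SM (M.erase (best T f))).card := Finset.card_le_card hBS
  have hci : (SM M).card = (SM (M.erase (best T f))).card - (best T f).card := by
    rw [hSrel]
    exact Finset.card_sdiff_of_subset hBS
  have hii : (SM (M.erase (best T f))).card = (SM M).card + (best T f).card := by omega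
  have hiun : (SM (M.erase (best T f))).card ≤ n := by
    simpa using Finset.card_le_univ (SM (M.erase (best T f)))
  obtain ⟨x0, hx0⟩ := hBne
  have hstar : (best T f).sup f ≤ z ((SM M).card) := by
    rw [← hfv x0 hx0]
    exact hv.2.2 (best T f) hB x0 hx0
  refine ⟨hv.1, ?_, ?_⟩
  · intro k hk
    have hkn : k < n := by omega
    have hsplit := filter_card_split hBS (fun j => f j ≤ z k)
    rw [← hSrel] at hsplit
    by_cases hcase : k < (SM M).card
    · have := hv.2.1 k hcase
      omega
    · push_neg at hcase
      have hzik : z ((SM M).card) ≤ z k := hm _ k hcase hkn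
      have hBfull : (best T f).filter (fun j => f j ≤ z k) = best T f :=
        Finset.filter_true_of_mem
          (fun x hx => le_trans (le_of_eq (hfv x hx)) (le_trans hstar hzik))
      have hSc : (SM M).card ≤ ((SM M).filter (fun j => f j ≤ z k)).card := by
        rcases Nat.eq_zero_or_pos (SM M).card with hi0 | hi0
        · omega
        · have hp := hv.2.1 ((SM M).card - 1) (by omega)
          have hz2 : z ((SM M).card - 1) ≤ z k := hm _ k (by omega) hkn
          have hsub2 : (SM M).filter (fun j => f j ≤ z ((SM M).card - 1))
              ⊆ (SM M).filter (fun j => f j ≤ z k) :=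
            Finset.monotone_filter_right _ (fun x _ hx => le_trans hx hz2)
          have := Finset.card_le_card hsub2
          omega
      rw [hBfull] at hsplit
      omega
  · intro B hBm j hj
    have h1 : f j ≤ z ((SM M).card) := hv.2.2 B (Finset.mem_of_mem_erase hBm) j hj
    have hBne2 : B.Nonempty := block_nonempty hT (hM' hBm)
    obtain ⟨y, hy⟩ := hBne2
    have hyS : y ∉ SM (M.erase (best T f)) := by
      rw [SM, Finset.mem_sdiff]
      rintro ⟨-, hns⟩
      exact hns (Finset.mem_sup.mpr ⟨B, hBm, hy⟩)
    have hlt : (SM (M.erase (best T f))).card < n := by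
      have : SM (M.erase (best T f)) ⊂ univ := by
        rw [Finset.ssubset_univ_iff]
        intro h
        exact hyS (h ▸ Finset.mem_univ y)
      have := Finset.card_lt_card this
      simpa using this
    exact le_trans h1 (hm _ _ (by omega) hlt)

end Claims

end Gon


namespace Gon

section InvolSum

variable {R : Type*} [CommRing R]
variable {n : ℕ} (z : ℕ → ℕ)

lemma invol (hn : 0 < n) (hm : ∀ i j, i ≤ j → j < n → z i ≤ z j)
    {T : Finset (Finset (Fin n))} (hT : isPartOf univ T) :
    ∑ M ∈ T.powerset, (-1 : R) ^ M.card * (NF z T M : R) = 0 := by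
  classical
  have hTne : T.Nonempty := T_nonempty hn hT
  have hNF : ∀ M, (NF z T M : R) = ∑ f ∈ Box z, if Valid z T M f then (1 : R) else 0 := by
    intro M
    rw [NF, Finset.filter_congr_decidable, Finset.card_filter]
    push_cast
    rfl
  have hsum : ∑ M ∈ T.powerset, (-1 : R) ^ M.card * (NF z T M : R)
      = ∑ p ∈ T.powerset ×ˢ Box z, (if Valid z T p.1 p.2 then (-1 : R) ^ p.1.card else 0) := by
    rw [Finset.sum_product]
    apply Finset.sum_congr rfl
    intro M _
    rw [hNF, Finset.mul_sum]
    apply Finset.sum_congr rfl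
    intro f _
    rw [mul_ite, mul_one, mul_zero]
  rw [hsum]
  apply Finset.sum_involution
    (g := fun p _ => (if best T p.2 ∈ p.1 then p.1.erase (best T p.2)
      else insert (best T p.2) p.1, p.2))
  · -- cancellation
    intro p hp
    rw [Finset.mem_product] at hp
    have hMsub : p.1 ⊆ T := Finset.mem_powerset.mp hp.1
    by_cases hval : Valid z T p.1 p.2
    · by_cases hbest : best T p.2 ∈ p.1
      · have hval2 : Valid z T (p.1.erase (best T p.2)) p.2 :=
          claimB z hn hm hT hMsub hval hbest
        simp only [if_pos hbest, if_pos hval, if_pos hval2]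
        have hcard : (p.1.erase (best T p.2)).card + 1 = p.1.card :=
          Finset.card_erase_add_one hbest
        rw [← hcard, pow_succ]
        ring
      · have hval2 : Valid z T (insert (best T p.2) p.1) p.2 :=
          claimA z hn hm hT hMsub hval hbest
        simp only [if_neg hbest, if_pos hval, if_pos hval2]
        have hcard : (insert (best T p.2) p.1).card = p.1.card + 1 :=
          Finset.card_insert_of_notMem hbest
        rw [hcard, pow_succ]
        ring
    · have hval2 : ¬ Valid z T (if best T p.2 ∈ p.1 then p.1.erase (best T p.2)
          else insert (best T p.2) p.1) p.2 := by
        by_cases hbest : best T p.2 ∈ p.1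
        · rw [if_pos hbest]
          intro hv2
          have hsub2 : p.1.erase (best T p.2) ⊆ T :=
            le_trans (Finset.erase_subset _ _) hMsub
          have := claimA z hn hm hT hsub2 hv2 (Finset.notMem_erase _ _)
          rw [Finset.insert_erase hbest] at this
          exact hval this
        · rw [if_neg hbest]
          intro hv2
          have hsub2 : insert (best T p.2) p.1 ⊆ T :=
            Finset.insert_subset (best_mem hTne p.2) hMsub
          have := claimB z hn hm hT hsub2 hv2 (Finset.mem_insert_self _ _)
          rw [Finset.erase_insert hbest] at this
          exact hval this
      rw [if_neg hval, if_neg hval2]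
      ring
  · -- g ≠ id
    intro p hp hne
    intro hgp
    by_cases hbest : best T p.2 ∈ p.1
    · rw [if_pos hbest] at hgp
      have := congrArg Prod.fst hgp
      simp only at this
      rw [Finset.erase_eq_self] at this
      exact this hbest
    · rw [if_neg hbest] at hgp
      have := congrArg Prod.fst hgp
      simp only at this
      rw [Finset.insert_eq_self] at this
      exact hbest this
  · -- involution
    intro p hp
    dsimp only
    by_cases hbest : best T p.2 ∈ p.1
    · rw [if_pos hbest, if_neg (Finset.notMem_erase _ _), Finset.insert_erase hbest]
    · rw [if_neg hbest, if_pos (Finset.mem_insert_self _ _), Finset.erase_insert hbest]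
  · -- g mem
    intro p hp
    rw [Finset.mem_product] at hp ⊢
    refine ⟨Finset.mem_powerset.mpr ?_, hp.2⟩
    by_cases hbest : best T p.2 ∈ p.1
    · rw [if_pos hbest]
      exact le_trans (Finset.erase_subset _ _) (Finset.mem_powerset.mp hp.1)
    · rw [if_neg hbest]
      exact Finset.insert_subset (best_mem hTne p.2) (Finset.mem_powerset.mp hp.1)

end InvolSum

end Gon


namespace Gon

section Regroup

variable {R : Type*} [CommRing R]
variable {n : ℕ} (z : ℕ → ℕ) (w : ℕ → R)

lemma PQ_disjoint {S : Finset (Fin n)} {P Q : Finset (Finset (Fin n))}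
    (hP : isPartOf S P) (hQ : isPartOf ((univ : Finset (Fin n)) \ S) Q) :
    Disjoint P Q := by
  rw [Finset.disjoint_left]
  intro B hBP hBQ
  have hBne : B.Nonempty := by
    rw [Finset.nonempty_iff_ne_empty]
    intro h
    exact hP.2.2 (by rw [show (⊥ : Finset (Fin n)) = ∅ from rfl, ← h]; exact hBP)
  obtain ⟨x, hx⟩ := hBne
  have hxS : x ∈ S := by
    rw [← hP.2.1]
    exact Finset.mem_sup.mpr ⟨B, hBP, hx⟩
  have hxS' : x ∈ (univ : Finset (Fin n)) \ S := by
    rw [← hQ.2.1]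
    exact Finset.mem_sup.mpr ⟨B, hBQ, hx⟩
  exact (Finset.mem_sdiff.mp hxS').2 hxS

lemma merge_isPart {S : Finset (Fin n)} {P Q : Finset (Finset (Fin n))}
    (hP : isPartOf S P) (hQ : isPartOf ((univ : Finset (Fin n)) \ S) Q) :
    isPartOf univ (P ∪ Q) := by
  have hsubP : ∀ B ∈ P, ∀ x ∈ B, x ∈ S := by
    intro B hB x hx
    rw [← hP.2.1]
    exact Finset.mem_sup.mpr ⟨B, hB, hx⟩
  have hsubQ : ∀ B ∈ Q, ∀ x ∈ B, x ∉ S := by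
    intro B hB x hx
    have : x ∈ (univ : Finset (Fin n)) \ S := by
      rw [← hQ.2.1]
      exact Finset.mem_sup.mpr ⟨B, hB, hx⟩
    exact (Finset.mem_sdiff.mp this).2
  refine ⟨?_, ?_, ?_⟩
  · rw [Finset.supIndep_iff_pairwiseDisjoint]
    intro B₁ hB₁ B₂ hB₂ hne
    simp only [Finset.coe_union, Set.mem_union, Finset.mem_coe] at hB₁ hB₂
    have hcross : ∀ C₁ ∈ P, ∀ C₂ ∈ Q, Disjoint (id C₁) (id C₂) := by
      intro C₁ h₁ C₂ h₂
      simp only [id]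
      rw [Finset.disjoint_left]
      intro x hx₁ hx₂
      exact hsubQ C₂ h₂ x hx₂ (hsubP C₁ h₁ x hx₁)
    rcases hB₁ with h₁ | h₁ <;> rcases hB₂ with h₂ | h₂
    · exact (Finset.supIndep_iff_pairwiseDisjoint.mp hP.1) h₁ h₂ hne
    · exact hcross _ h₁ _ h₂
    · exact (hcross _ h₂ _ h₁).symm
    · exact (Finset.supIndep_iff_pairwiseDisjoint.mp hQ.1) h₁ h₂ hne
  · rw [Finset.sup_union, hP.2.1, hQ.2.1, Finset.sup_eq_union]
    rw [Finset.union_sdiff_of_subset (Finset.subset_univ S)]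
  · intro h
    rcases Finset.mem_union.mp h with h | h
    · exact hP.2.2 h
    · exact hQ.2.2 h

lemma split_isPart₁ {T M : Finset (Finset (Fin n))} (hT : isPartOf univ T) (hM : M ⊆ T) :
    isPartOf ((T \ M).sup id) (T \ M) :=
  ⟨hT.1.subset Finset.sdiff_subset, rfl, fun h => hT.2.2 (Finset.sdiff_subset h)⟩

lemma split_isPart₂ {T M : Finset (Finset (Fin n))} (hT : isPartOf univ T) (hM : M ⊆ T) :
    isPartOf ((univ : Finset (Fin n)) \ (T \ M).sup id) M := by
  refine ⟨hT.1.subset hM, ?_, fun h => hT.2.2 (hM h)⟩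
  ext x
  simp only [Finset.mem_sdiff, Finset.mem_univ, true_and, Finset.mem_sup]
  constructor
  · rintro ⟨C, hC, hxC⟩
    rintro ⟨B, hB, hxB⟩
    have hne : B ≠ C := fun h => hB.2 (h ▸ hC)
    have hd := (Finset.supIndep_iff_pairwiseDisjoint.mp hT.1) hB.1 (hM hC) hne
    simp only [Function.onFun, id] at hd
    exact (Finset.disjoint_left.mp hd) hxB hxC
  · intro h
    have hx : x ∈ T.sup id := by rw [hT.2.1]; exact Finset.mem_univ x
    rw [Finset.mem_sup] at hx
    obtain ⟨B, hB, hxB⟩ := hx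
    by_cases hBM : B ∈ M
    · exact ⟨B, hBM, hxB⟩
    · exact absurd ⟨B, ⟨hB, hBM⟩, hxB⟩ h

lemma pair_value (hm : ∀ i j, i ≤ j → j < n → z i ≤ z j)
    {S : Finset (Fin n)} {P Q : Finset (Finset (Fin n))}
    (hP : isPartOf S P) (hQ : isPartOf ((univ : Finset (Fin n)) \ S) Q) :
    (wp w P * (PFS z S P : R)) * (wp w Q * (-(z S.card : R)) ^ Q.card)
      = wp w (P ∪ Q) * ((-1 : R) ^ Q.card * (NF z (P ∪ Q) Q : R)) := by
  have hwp : wp (γ := Fin n) w (P ∪ Q) = wp w P * wp w Q :=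
    Finset.prod_union (PQ_disjoint hP hQ)
  have hm' : ∀ i j, i ≤ j → j < Fintype.card (Fin n) → z i ≤ z j := by
    intro i j hij hj
    exact hm i j hij (by simpa using hj)
  have hcnt := count_merge z hm' hP hQ
  have hcntR : (PFS z S P : R) * ((z S.card : ℕ) : R) ^ Q.card = (NF z (P ∪ Q) Q : R) := by
    exact_mod_cast congrArg (Nat.cast : ℕ → R) hcnt
  have hneg : (-(z S.card : R)) ^ Q.card = (-1 : R) ^ Q.card * (z S.card : R) ^ Q.card := by
    rw [neg_pow]
  rw [hwp, hneg, ← hcntR]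
  ring

end Regroup

end Gon


namespace Gon

section Step2

variable {R : Type*} [CommRing R]
variable {n : ℕ} (z : ℕ → ℕ) (w : ℕ → R)

lemma step2 (hm : ∀ i j, i ≤ j → j < n → z i ≤ z j) :
    ∑ S : Finset (Fin n), GG w z S
      = ∑ T ∈ cand (univ : Finset (Fin n)),
          wp w T * (∑ M ∈ T.powerset, (-1 : R) ^ M.card * (NF z T M : R)) := by
  classical
  -- the flattened summands
  set F : Finset (Finset (Fin n)) × Finset (Finset (Fin n)) → R := fun pq =>
    (wp w pq.1 * (PFS z (pq.1.sup id) pq.1 : R)) *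
      (wp w pq.2 * (-(z ((pq.1.sup id : Finset (Fin n)).card) : R)) ^ pq.2.card) with hF
  set G : Finset (Finset (Fin n)) × Finset (Finset (Fin n)) → R := fun tm =>
    wp w tm.1 * ((-1 : R) ^ tm.2.card * (NF z tm.1 tm.2 : R)) with hG
  have lhs : ∑ S : Finset (Fin n), GG w z S
      = ∑ pq ∈ (univ ×ˢ univ).filter
          (fun pq : Finset (Finset (Fin n)) × Finset (Finset (Fin n)) =>
            pq.1 ∈ cand (pq.1.sup id) ∧ pq.2 ∈ cand ((univ : Finset (Fin n)) \ pq.1.sup id)),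
          F pq := by
    rw [Finset.sum_filter, Finset.sum_product]
    have collapse : ∀ P : Finset (Finset (Fin n)),
        (∑ Q : Finset (Finset (Fin n)),
          if P ∈ cand (P.sup id) ∧ Q ∈ cand ((univ : Finset (Fin n)) \ P.sup id)
          then F (P, Q) else 0)
        = if P ∈ cand (P.sup id) then
            (∑ Q ∈ cand ((univ : Finset (Fin n)) \ P.sup id), F (P, Q)) else 0 := by
      intro P
      by_cases hP : P ∈ cand (P.sup id)
      · rw [if_pos hP]
        have hcong : ∀ Q ∈ (univ : Finset (Finset (Finset (Fin n)))),
            (if P ∈ cand (P.sup id) ∧ Q ∈ cand ((univ : Finset (Fin n)) \ P.sup id)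
              then F (P, Q) else 0)
            = (if Q ∈ cand ((univ : Finset (Fin n)) \ P.sup id) then F (P, Q) else 0) := by
          intro Q _
          by_cases hQ : Q ∈ cand ((univ : Finset (Fin n)) \ P.sup id)
          · rw [if_pos hQ, if_pos ⟨hP, hQ⟩]
          · rw [if_neg hQ, if_neg (fun h => hQ h.2)]
        rw [Finset.sum_congr rfl hcong, Finset.sum_ite_mem, Finset.univ_inter]
      · rw [if_neg hP]
        apply Finset.sum_eq_zero
        intro Q _
        rw [if_neg (fun h => hP h.1)]
    rw [Finset.sum_congr rfl (fun P _ => collapse P)]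
    -- now reverse: sum over S of GG equals sum over P of the collapsed ite
    have huniv : ∀ S : Finset (Fin n), GG w z S
        = ∑ P : Finset (Finset (Fin n)),
            if P ∈ cand S then (∑ Q ∈ cand ((univ : Finset (Fin n)) \ S),
              (wp w P * (PFS z S P : R)) *
                (wp w Q * (-(z S.card : R)) ^ Q.card)) else 0 := by
      intro S
      rw [Finset.sum_ite_mem univ _ _, Finset.univ_inter, GG, Finset.sum_mul_sum]
    rw [Finset.sum_congr rfl (fun S _ => huniv S), Finset.sum_comm]
    apply Finset.sum_congr rfl
    intro P _
    apply Finset.sum_eq_single (P.sup id)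
    · intro S _ hne
      rw [if_neg]
      intro h
      exact hne ((mem_cand.mp h).2.1.symm ▸ rfl)
    · intro h
      exact absurd (Finset.mem_univ _) h
  have rhs : ∑ T ∈ cand (univ : Finset (Fin n)),
        wp w T * (∑ M ∈ T.powerset, (-1 : R) ^ M.card * (NF z T M : R))
      = ∑ tm ∈ (univ ×ˢ univ).filter
          (fun tm : Finset (Finset (Fin n)) × Finset (Finset (Fin n)) =>
            tm.1 ∈ cand (univ : Finset (Fin n)) ∧ tm.2 ∈ tm.1.powerset), G tm := by
    rw [Finset.sum_filter, Finset.sum_product]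
    have collapse : ∀ T : Finset (Finset (Fin n)),
        (∑ M : Finset (Finset (Fin n)),
          if T ∈ cand (univ : Finset (Fin n)) ∧ M ∈ T.powerset then G (T, M) else 0)
        = if T ∈ cand (univ : Finset (Fin n)) then
            (∑ M ∈ T.powerset, G (T, M)) else 0 := by
      intro T
      by_cases hT : T ∈ cand (univ : Finset (Fin n))
      · rw [if_pos hT]
        have hcong : ∀ M ∈ (univ : Finset (Finset (Finset (Fin n)))),
            (if T ∈ cand (univ : Finset (Fin n)) ∧ M ∈ T.powerset then G (T, M) else 0)
            = (if M ∈ T.powerset then G (T, M) else 0) := by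
          intro M _
          by_cases hM : M ∈ T.powerset
          · rw [if_pos hM, if_pos ⟨hT, hM⟩]
          · rw [if_neg hM, if_neg (fun h => hM h.2)]
        rw [Finset.sum_congr rfl hcong, Finset.sum_ite_mem, Finset.univ_inter]
      · rw [if_neg hT]
        apply Finset.sum_eq_zero
        intro M _
        rw [if_neg (fun h => hT h.1)]
    rw [Finset.sum_congr rfl (fun T _ => collapse T)]
    rw [Finset.sum_ite_mem, Finset.univ_inter]
    apply Finset.sum_congr rfl
    intro T _
    rw [Finset.mul_sum]
  rw [lhs, rhs]
  apply Finset.sum_nbij' (fun pq => (pq.1 ∪ pq.2, pq.2)) (fun tm => (tm.1 \ tm.2, tm.2))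
  · -- forward membership
    intro pq hpq
    rw [Finset.mem_filter] at hpq ⊢
    obtain ⟨-, hP, hQ⟩ := hpq
    rw [mem_cand] at hP hQ
    refine ⟨Finset.mem_mk.mpr ?_ , ?_, ?_⟩
    · exact Finset.mem_product.mpr ⟨Finset.mem_univ _, Finset.mem_univ _⟩
    · exact mem_cand.mpr (merge_isPart hP hQ)
    · exact Finset.mem_powerset.mpr Finset.subset_union_right
  · -- backward membership
    intro tm htm
    rw [Finset.mem_filter] at htm ⊢
    obtain ⟨-, hT, hM⟩ := htm
    rw [mem_cand] at hT
    rw [Finset.mem_powerset] at hM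
    refine ⟨Finset.mem_product.mpr ⟨Finset.mem_univ _, Finset.mem_univ _⟩, ?_, ?_⟩
    · exact mem_cand.mpr (split_isPart₁ hT hM)
    · exact mem_cand.mpr (split_isPart₂ hT hM)
  · -- left inverse
    intro pq hpq
    rw [Finset.mem_filter] at hpq
    obtain ⟨-, hP, hQ⟩ := hpq
    rw [mem_cand] at hP hQ
    have hdisj := PQ_disjoint hP hQ
    exact Prod.ext (by dsimp only; rw [Finset.union_sdiff_cancel_right hdisj]) rfl
  · -- right inverse
    intro tm htm
    rw [Finset.mem_filter] at htm
    obtain ⟨-, hT, hM⟩ := htm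
    rw [Finset.mem_powerset] at hM
    exact Prod.ext (by dsimp only; rw [Finset.sdiff_union_of_subset hM]) rfl
  · -- values
    intro pq hpq
    rw [Finset.mem_filter] at hpq
    obtain ⟨-, hP, hQ⟩ := hpq
    rw [mem_cand] at hP hQ
    rw [hF, hG]
    exact pair_value z w hm hP hQ

end Step2

end Gon


section Final

open Gon

variable {R : Type*} [CommRing R] [Algebra ℚ R]

lemma gonc_eq {S : Type*} [CommRing S] (p : ℕ → S → S) (Z : ℕ → S) (n : ℕ) (x : S) :
    gonc p Z n x = p n x - ∑ i ∈ Finset.range n,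
      (n.choose i : S) * p (n - i) (Z i) * gonc p Z i x := by
  rw [gonc]
  exact congrArg (fun t => p n x - t) (Finset.sum_attach (Finset.range n)
    (fun i => (n.choose i : S) * p (n - i) (Z i) * gonc p Z i x))

lemma aEnum_zero (w : ℕ → R) {n : ℕ} (hn : 0 < n) : aEnum w n (0 : R) = 0 := by
  rw [aEnum, if_neg hn.ne']
  apply Finset.sum_eq_zero
  intro π _
  haveI : Nonempty (Fin n) := ⟨⟨0, hn⟩⟩
  have hne : π.parts.Nonempty := π.parts_nonempty (by
    rw [show (⊥ : Finset (Fin n)) = ∅ from rfl]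
    exact Finset.univ_nonempty.ne_empty)
  rw [zero_pow (Finset.card_pos.mpr hne).ne', mul_zero]

lemma NN_zero (w : ℕ → R) (z : ℕ → ℕ) : NN w z 0 = 1 := by
  have hpart : ∀ σ : Finpartition (univ : Finset (Fin 0)), σ.parts = ∅ := by
    intro σ
    rw [Finpartition.parts_eq_empty_iff]
    simp
  haveI : Subsingleton (Finpartition (univ : Finset (Fin 0))) :=
    ⟨fun a b => Finpartition.ext (by rw [hpart a, hpart b])⟩
  haveI : Unique {f : Fin 0 → ℕ //
      (∀ B ∈ (⊥ : Finpartition (univ : Finset (Fin 0))).parts,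
        ∀ i ∈ B, ∀ j ∈ B, f i = f j) ∧ IsParking z f} := by
    refine ⟨⟨⟨fun j => j.elim0, ?_, fun j => j.elim0, fun i => i.elim0⟩⟩, ?_⟩
    · intro B hB
      rw [hpart ⊥] at hB
      exact absurd hB (Finset.notMem_empty _)
    · intro f
      apply Subtype.ext
      funext j
      exact j.elim0
  rw [NN, Fintype.sum_subsingleton _ ⊥]
  rw [show zetaWeight w (⊥ : Finpartition (univ : Finset (Fin 0))) = 1 from by
    rw [zetaWeight, hpart ⊥, Finset.prod_empty]]
  rw [show PFcount (⊥ : Finpartition (univ : Finset (Fin 0))) z = 1 from Nat.card_unique]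
  norm_num

lemma key_identity (w : ℕ → R) (z : ℕ → ℕ) {n : ℕ} (hn : 0 < n)
    (hm : ∀ i j, i ≤ j → j < n → z i ≤ z j) :
    ∑ i ∈ Finset.range (n + 1),
      (n.choose i : R) * (aEnum w (n - i) (-(z i : R)) * NN w z i) = 0 := by
  classical
  have h1 : ∀ i ∈ Finset.range (n + 1),
      (n.choose i : R) * (aEnum w (n - i) (-(z i : R)) * NN w z i)
        = ∑ S ∈ powersetCard i (univ : Finset (Fin n)), GG w z S := by
    intro i hi
    exact step1 w z (Nat.lt_succ_iff.mp (Finset.mem_range.mp hi))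
  rw [Finset.sum_congr rfl h1]
  have h2 : ∑ i ∈ Finset.range (n + 1), ∑ S ∈ powersetCard i (univ : Finset (Fin n)), GG w z S
      = ∑ S : Finset (Fin n), GG w z S := by
    have h3 := Finset.sum_powerset (univ : Finset (Fin n)) (GG w z)
    rw [Finset.card_univ, Fintype.card_fin] at h3
    rw [← h3, Finset.powerset_univ]
  rw [h2, step2 z w hm]
  apply Finset.sum_eq_zero
  intro T hT
  rw [invol z hn hm (mem_cand.mp hT), mul_zero]

end Final

/-- Theorem 3.5 (first expression): for positive integers `z_0 ≤ ⋯ ≤ z_{n-1}`, the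
Gončarov polynomial for the grid `-Z`, evaluated at `0`, equals
`∑_{π ∈ Π_n} w(0̂, π) PF_π(Z)`. -/
theorem goncarov_partition_lattice_zero (w : ℕ → R) (hw : w 1 = 1) (n : ℕ) (z : ℕ → ℕ)
    (hpos : ∀ i < n, 0 < z i) (hmono : ∀ i j, i ≤ j → j < n → z i ≤ z j) :
    gonc (aEnum w) (fun i => -(z i : R)) n (0 : R)
      = ∑ π : Finpartition (univ : Finset (Fin n)), zetaWeight w π * (PFcount π z : R) := by
  show gonc (aEnum w) (fun i => -(z i : R)) n (0 : R) = NN w z n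
  induction n using Nat.strong_induction_on with
  | _ n ih =>
    rcases Nat.eq_zero_or_pos n with hn | hn
    · subst hn
      rw [gonc_eq, NN_zero]
      simp [aEnum]
    · have hrec : ∀ i ∈ Finset.range n, gonc (aEnum w) (fun i => -(z i : R)) i (0 : R)
          = NN w z i := by
        intro i hi
        have hilt := Finset.mem_range.mp hi
        exact ih i hilt (fun k hk => hpos k (lt_trans hk hilt))
          (fun a b hab hb => hmono a b hab (lt_trans hb hilt))
      have hkey := key_identity w z hn hmono
      rw [Finset.sum_range_succ] at hkey
      rw [Nat.choose_self, Nat.sub_self, Nat.cast_one, one_mul] at hkey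
      rw [show aEnum w 0 (-(z n : R)) = 1 from by rw [aEnum, if_pos rfl], one_mul] at hkey
      rw [gonc_eq, aEnum_zero w hn]
      rw [Finset.sum_congr rfl (fun i hi => by rw [hrec i hi])]
      have : ∑ i ∈ Finset.range n,
          (n.choose i : R) * aEnum w (n - i) (-(z i : R)) * NN w z i
          = ∑ i ∈ Finset.range n,
          (n.choose i : R) * (aEnum w (n - i) (-(z i : R)) * NN w z i) := by
        apply Finset.sum_congr rfl
        intro i _
        ring
      rw [this]
      linear_combination -hkey
end

section
/- For every n ≥ 1, the polynomial identity Σ_{π ∈ Π_n} ( ∏_{B a block of π} |B|^{|B|−1} ) · x^{|π|} = x·(x+n)^{n−1} holds (as an identity of polynomials in x with integer coefficients); that is, the zeta-type enumerator with weights w(m) = m^{m−1} is the n-th Abel polynomial. -/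
open Finset Polynomial


lemma findiff (n : ℕ) : ∀ d : ℕ, d < n →
    ∑ k ∈ range (n+1), (-1:Polynomial ℤ)^k * (n.choose k : Polynomial ℤ) * (X + (k:Polynomial ℤ))^d = 0 := by
  induction n with
  | zero => intro d hd; omega
  | succ n ih =>
    intro d hd
    set f : ℕ → Polynomial ℤ := fun k => (X + (k:Polynomial ℤ))^d with hf
    have key : ∑ k ∈ range (n+2), (-1:Polynomial ℤ)^k * ((n+1).choose k : Polynomial ℤ) * f k
        = ∑ k ∈ range (n+1), (-1:Polynomial ℤ)^k * (n.choose k : Polynomial ℤ) * (f k - f (k+1)) := by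
      rw [Finset.sum_range_succ']
      have e1 : ∀ k ∈ range (n+1), (-1:Polynomial ℤ)^(k+1) * ((n+1).choose (k+1) : Polynomial ℤ) * f (k+1)
          = (-1:Polynomial ℤ)^(k+1) * (n.choose (k+1) : Polynomial ℤ) * f (k+1)
            + (-1:Polynomial ℤ)^(k+1) * (n.choose k : Polynomial ℤ) * f (k+1) := by
        intro k _; rw [Nat.choose_succ_succ]; push_cast; ring
      rw [Finset.sum_congr rfl e1, Finset.sum_add_distrib]
      have this1 := Finset.sum_range_succ' (fun k => (-1:Polynomial ℤ)^k * (n.choose k : Polynomial ℤ) * f k) (n+1)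
      rw [Finset.sum_range_succ] at this1
      simp only [Nat.choose_succ_self, Nat.cast_zero, mul_zero, zero_mul, add_zero, mul_one,
        Nat.choose_zero_right, Nat.cast_one, pow_zero, one_mul] at this1
      have hB : (∑ k ∈ range (n+1), (-1:Polynomial ℤ)^(k+1) * (n.choose k : Polynomial ℤ) * f (k+1))
          + ∑ k ∈ range (n+1), (-1:Polynomial ℤ)^k * (n.choose k : Polynomial ℤ) * f (k+1) = 0 := by
        rw [← Finset.sum_add_distrib]; apply Finset.sum_eq_zero; intro k _; ring
      simp only [pow_zero, Nat.choose_zero_right, Nat.cast_one, one_mul, mul_sub]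
      rw [Finset.sum_sub_distrib]
      linear_combination hB - this1
    have diff : ∀ k : ℕ, f k - f (k+1) = -∑ e ∈ range d, (d.choose e : Polynomial ℤ) * (X + (k:Polynomial ℤ))^e := by
      intro k
      have hb : f (k+1) = ∑ e ∈ range (d+1), (X + (k:Polynomial ℤ))^e * (d.choose e : Polynomial ℤ) := by
        rw [hf]; push_cast
        have h2 : (X + ((k:Polynomial ℤ)+1)) = (X + (k:Polynomial ℤ)) + 1 := by ring
        rw [h2, add_pow]
        apply Finset.sum_congr rfl; intro e _; ring
      rw [hb, Finset.sum_range_succ, hf]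
      simp only [Nat.choose_self, Nat.cast_one, mul_one]
      have hc : ∑ x ∈ range d, (X + (k:Polynomial ℤ))^x * (d.choose x : Polynomial ℤ)
          = ∑ e ∈ range d, (d.choose e : Polynomial ℤ) * (X + (k:Polynomial ℤ))^e :=
        Finset.sum_congr rfl (fun e _ => mul_comm _ _)
      rw [hc]; ring
    show ∑ k ∈ range (n+1+1), (-1:Polynomial ℤ)^k * ((n+1).choose k : Polynomial ℤ) * f k = 0
    rw [key]
    have step : ∀ k ∈ range (n+1), (-1:Polynomial ℤ)^k * (n.choose k : Polynomial ℤ) * (f k - f (k+1))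
        = ∑ e ∈ range d, (-(d.choose e : Polynomial ℤ)) * ((-1:Polynomial ℤ)^k * (n.choose k : Polynomial ℤ) * (X + (k:Polynomial ℤ))^e) := by
      intro k _
      rw [diff k, mul_neg, Finset.mul_sum, ← Finset.sum_neg_distrib]
      apply Finset.sum_congr rfl; intro e _; ring
    rw [Finset.sum_congr rfl step, Finset.sum_comm]
    apply Finset.sum_eq_zero
    intro e he
    have : ∑ k ∈ range (n+1), (-1:Polynomial ℤ)^k * (n.choose k : Polynomial ℤ) * (X + (k:Polynomial ℤ))^e = 0 :=
      ih e (by simp at he; omega)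
    rw [← Finset.mul_sum, this, mul_zero]


noncomputable def abelP : ℕ → Polynomial ℤ
  | 0 => 1
  | (n+1) => X * (X + ((n:ℤ[X]) + 1))^n

noncomputable def abelA (n : ℕ) : Polynomial (Polynomial ℤ) :=
  ∑ k ∈ range (n+1), (n.choose k : Polynomial (Polynomial ℤ)) * C (abelP k)
      * (X + (((n - k : ℕ)) : Polynomial (Polynomial ℤ)))^(n-k)

lemma neg_one_pow_sub {R : Type*} [CommRing R] {k m : ℕ} (h : k ≤ m) :
    (-1:R)^(m-k) = (-1)^m * (-1)^k := by
  have h1 : (-1:R)^m = (-1)^(m-k) * (-1)^k := by rw [← pow_add, Nat.sub_add_cancel h]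
  have h2 : ((-1:R)^k) * ((-1:R)^k) = 1 := by
    rw [← pow_add, ← two_mul, pow_mul]; norm_num
  calc (-1:R)^(m-k) = (-1)^(m-k) * ((-1)^k * (-1)^k) := by rw [h2, mul_one]
    _ = (-1)^m * (-1)^k := by rw [← mul_assoc, ← h1]

theorem abelA_eq (n : ℕ) : abelA n = (X + C (X + (n : Polynomial ℤ)))^n := by
  induction n with
  | zero => simp [abelA, abelP]
  | succ n ih =>
    have hstep2 : ∑ k ∈ range (n+1), ((n.choose k : Polynomial (Polynomial ℤ))) * C (abelP k)
        * (X + 1 + (((n-k:ℕ)) : Polynomial (Polynomial ℤ)))^(n-k)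
        = (X + 1 + C (X + (n : Polynomial ℤ)))^n := by
      have hih := congrArg (fun p => p.comp (X + 1 : Polynomial (Polynomial ℤ))) ih
      simp only [abelA, Polynomial.sum_comp, mul_comp, pow_comp,
        add_comp, X_comp, C_comp, natCast_comp, one_comp] at hih
      rw [← hih]
    have hderiv : derivative (abelA (n+1))
        = ((n:Polynomial (Polynomial ℤ))+1) * (X + 1 + C (X + (n : Polynomial ℤ)))^n := by
      rw [← hstep2]
      unfold abelA
      rw [derivative_sum, Finset.sum_range_succ]
      simp only [Nat.sub_self, pow_zero, mul_one, Nat.cast_zero]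
      rw [Finset.mul_sum]
      have hlast : derivative ((((n+1).choose (n+1) : ℕ) : Polynomial (Polynomial ℤ)) * C (abelP (n+1))) = 0 := by
        simp
      rw [hlast, add_zero]
      apply Finset.sum_congr rfl
      intro k hk
      have hk' : k ≤ n := by simpa using Nat.lt_succ_iff.mp (Finset.mem_range.mp hk)
      have h2 : n + 1 - k = (n - k) + 1 := by omega
      rw [h2]
      simp only [derivative_mul, derivative_natCast, derivative_C, zero_mul, mul_zero, zero_add,
        add_zero, derivative_pow, derivative_add, derivative_X, derivative_natCast, Nat.cast_add,
        Nat.cast_one, Nat.add_sub_cancel, mul_one]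
      have hc : (((n+1).choose k : ℕ) : Polynomial (Polynomial ℤ)) * (((n-k:ℕ) : Polynomial (Polynomial ℤ))+1)
          = ((n:Polynomial (Polynomial ℤ))+1) * ((n.choose k : ℕ) : Polynomial (Polynomial ℤ)) := by
        have h3 := congrArg (Nat.cast : ℕ → Polynomial (Polynomial ℤ)) (Nat.choose_mul_succ_eq n k)
        rw [h2] at h3
        push_cast at h3
        linear_combination -h3
      have hbase : (X + ((((n-k):ℕ) : Polynomial (Polynomial ℤ)) + 1)) = X + 1 + (((n-k:ℕ)) : Polynomial (Polynomial ℤ)) := by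
        ring
      rw [hbase]
      simp only [derivative_one, add_zero, map_add, map_one, map_natCast]
      linear_combination (X + 1 + (((n-k:ℕ)) : Polynomial (Polynomial ℤ)))^(n-k) * C (abelP k) * hc
    set c₀ : Polynomial ℤ := -(X + ((n:Polynomial ℤ)+1)) with hc₀
    have habelmul : ∀ k ≤ n+1, abelP k * (X+(k:Polynomial ℤ))^(n+1-k) = X * (X+(k:Polynomial ℤ))^n := by
      intro k hk
      rcases k with _ | j
      · simp [abelP, pow_succ']
      · show (X * (X + ((j:Polynomial ℤ) + 1))^j) * (X + (((j+1:ℕ)):Polynomial ℤ))^(n+1-(j+1)) = _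
        have hcast : (((j+1:ℕ)):Polynomial ℤ) = (j:Polynomial ℤ) + 1 := by push_cast; ring
        have he : j + (n+1-(j+1)) = n := by omega
        rw [hcast, mul_assoc, ← pow_add, he]
    have heval1 : eval c₀ (abelA (n+1)) = 0 := by
      unfold abelA
      rw [eval_finset_sum]
      have hterm : ∀ k ∈ range (n+2), eval c₀ ((((n+1).choose k : ℕ) : Polynomial (Polynomial ℤ)) * C (abelP k)
            * (X + (((n+1-k:ℕ)) : Polynomial (Polynomial ℤ)))^(n+1-k))
          = ((-1:Polynomial ℤ)^(n+1) * X) * ((-1)^k * (((n+1).choose k : ℕ) : Polynomial ℤ) * (X + (k:Polynomial ℤ))^n) := by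
        intro k hk
        have hk' : k ≤ n + 1 := by simpa using Nat.lt_succ_iff.mp (Finset.mem_range.mp hk)
        simp only [eval_mul, eval_pow, eval_C, eval_add, eval_X, eval_natCast]
        have hpt : c₀ + ((n+1-k:ℕ) : Polynomial ℤ) = -(X + (k:Polynomial ℤ)) := by
          rw [hc₀, Nat.cast_sub hk']
          push_cast
          ring
        rw [hpt, neg_pow, neg_one_pow_sub hk']
        have := habelmul k hk'
        linear_combination (-1:Polynomial ℤ)^(n+1) * (-1)^k * (((n+1).choose k : ℕ) : Polynomial ℤ) * this
      rw [Finset.sum_congr rfl hterm, ← Finset.mul_sum]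
      rw [show n + 2 = (n+1) + 1 from rfl]
      have hfd : ∑ k ∈ range ((n+1)+1), (-1:Polynomial ℤ)^k * ((n+1).choose k : Polynomial ℤ) * (X + (k:Polynomial ℤ))^n = 0 :=
        findiff (n+1) n (by omega)
      rw [hfd, mul_zero]
    have heval2 : eval c₀ ((X + C (X + ((n:Polynomial ℤ)+1)))^(n+1)) = 0 := by
      simp only [eval_pow, eval_add, eval_X, eval_C, hc₀]
      rw [show -(X + ((n:Polynomial ℤ)+1)) + (X + ((n:Polynomial ℤ)+1)) = 0 by ring]
      exact zero_pow (by omega)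
    have hCeq : (X + 1 + C (X + (n : Polynomial ℤ))) = X + C (X + ((n:Polynomial ℤ)+1)) := by
      simp only [map_add, map_one, map_natCast]
      ring
    have hd : derivative (abelA (n+1) - (X + C (X + ((n:Polynomial ℤ)+1)))^(n+1)) = 0 := by
      rw [derivative_sub, hderiv, hCeq, derivative_pow]
      simp only [derivative_add, derivative_X, derivative_C, add_zero, mul_one, Nat.add_sub_cancel]
      simp only [map_add, map_one, map_natCast]
      push_cast
      ring
    have hC := eq_C_of_derivative_eq_zero hd
    have hzero : (abelA (n+1) - (X + C (X + ((n:Polynomial ℤ)+1)))^(n+1)).coeff 0 = 0 := by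
      have := congrArg (eval c₀) hC
      rw [eval_C, eval_sub, heval1, heval2] at this
      simpa using this.symm
    rw [hzero, map_zero] at hC
    have hfinal := sub_eq_zero.mp hC
    rw [hfinal]
    congr 2
    push_cast
    ring

theorem abelP_rec (p : ℕ) : abelP (p+1)
    = ∑ j ∈ range (p+1), (p.choose j : Polynomial ℤ) * (C ((((j+1:ℕ)):ℤ)^j) * X * abelP (p - j)) := by
  have h := congrArg (eval (1 : Polynomial ℤ)) (abelA_eq p)
  simp only [abelA, eval_finset_sum, eval_mul, eval_pow, eval_add, eval_X, eval_C,
    eval_natCast, eval_one] at h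
  have hL : abelP (p+1) = X * ∑ k ∈ range (p+1), ((p.choose k : ℕ) : Polynomial ℤ) * abelP k * ((1:Polynomial ℤ) + ((p-k:ℕ) : Polynomial ℤ))^(p-k) := by
    rw [h]
    show X * (X + ((p:Polynomial ℤ) + 1))^p = _
    congr 1
    ring_nf
  rw [hL, Finset.mul_sum, ← Finset.sum_range_reflect]
  apply Finset.sum_congr rfl
  intro j hj
  have hj' : j ≤ p := by simpa using Nat.lt_succ_iff.mp (Finset.mem_range.mp hj)
  have h1 : p - (p - j) = j := by omega
  have h2 : p.choose (p - j) = p.choose j := Nat.choose_symm hj'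
  have h0 : p + 1 - 1 - j = p - j := by omega
  rw [h0, h1, h2]
  have h3 : C ((((j+1:ℕ)):ℤ)^j) = ((1:Polynomial ℤ) + (j : Polynomial ℤ))^j := by
    rw [map_pow]
    push_cast
    ring_nf
    simp [map_add, map_one, map_natCast]
  rw [h3]
  ring


variable {α : Type*} [DecidableEq α]

lemma avoid_parts_of_mem {s B : Finset α} (π : Finpartition s) (hB : B ∈ π.parts) :
    (π.avoid B).parts = π.parts.erase B := by
  ext c
  rw [Finpartition.mem_avoid, Finset.mem_erase]
  constructor
  · rintro ⟨d, hd, hnle, rfl⟩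
    have hne : d ≠ B := fun h => hnle (h ▸ le_refl _)
    have hdis : Disjoint d B := π.disjoint hd hB hne
    rw [Finset.sdiff_eq_self_of_disjoint hdis]
    exact ⟨hne, hd⟩
  · rintro ⟨hne, hc⟩
    refine ⟨c, hc, ?_, ?_⟩
    · intro hle
      have hdis : Disjoint c B := π.disjoint hc hB hne
      have : c = ∅ := by
        have := hdis.mono_right (le_refl B)
        have h2 : c ≤ c ⊓ B := le_inf (le_refl c) hle
        have h3 : c ⊓ B = ⊥ := hdis.eq_bot
        simpa [h3, Finset.le_iff_subset, Finset.subset_empty] using h2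
      exact π.ne_bot hc this
    · exact Finset.sdiff_eq_self_of_disjoint (π.disjoint hc hB hne)

lemma extend_avoid {s B : Finset α} (π : Finpartition s) (hB : B ∈ π.parts)
    (h1 : B ≠ ⊥) (h2 : Disjoint (s \ B) B) (h3 : (s \ B) ⊔ B = s) :
    (π.avoid B).extend h1 h2 h3 = π := by
  apply Finpartition.ext
  rw [Finpartition.extend_parts, avoid_parts_of_mem π hB, Finset.insert_erase hB]

lemma avoid_extend {s B : Finset α} (π' : Finpartition (s \ B))
    (h1 : B ≠ ⊥) (h2 : Disjoint (s \ B) B) (h3 : (s \ B) ⊔ B = s) :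
    (π'.extend h1 h2 h3).avoid B = π' := by
  apply Finpartition.ext
  rw [avoid_parts_of_mem _ (by rw [Finpartition.extend_parts]; exact Finset.mem_insert_self _ _),
    Finpartition.extend_parts]
  rw [Finset.erase_insert]
  intro hmem
  have hle := π'.le hmem
  have : B ⊆ s \ B := hle
  have hBne : B.Nonempty := Finset.nonempty_iff_ne_empty.2 h1
  obtain ⟨x, hx⟩ := hBne
  have := this hx
  simp at this
  exact this.2 hx

noncomputable def Zp (s : Finset α) : Polynomial ℤ :=
  ∑ π : Finpartition s, C (∏ B ∈ π.parts, (B.card : ℤ) ^ (B.card - 1)) * X ^ π.parts.card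

lemma Zp_empty : Zp (∅ : Finset α) = 1 := by
  rw [Zp]
  rw [show (∅ : Finset α) = (⊥ : Finset α) from rfl]
  rw [Fintype.sum_unique]
  have hp : (default : Finpartition (⊥ : Finset α)).parts = ∅ := Finpartition.parts_eq_empty_iff.2 rfl
  rw [hp]
  simp

lemma Zp_rec {s : Finset α} {a : α} (ha : a ∈ s) :
    Zp s = ∑ T ∈ (s.erase a).powerset,
      C (((T.card + 1 : ℕ) : ℤ) ^ T.card) * X * Zp (s \ insert a T) := by
  classical
  rw [Zp]
  have hmap : ∀ π : Finpartition s, π ∈ (Finset.univ : Finset (Finpartition s)) →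
      (π.part a).erase a ∈ (s.erase a).powerset := by
    intro π _
    rw [Finset.mem_powerset]
    exact Finset.erase_subset_erase a (π.le (π.part_mem.2 ha))
  rw [← Finset.sum_fiberwise_of_maps_to hmap]
  apply Finset.sum_congr rfl
  intro T hT
  rw [Finset.mem_powerset] at hT
  have haT : a ∉ T := fun h => (Finset.mem_erase.1 (hT h)).1 rfl
  have hBs : insert a T ⊆ s := Finset.insert_subset ha (hT.trans (Finset.erase_subset a s))
  have h1 : insert a T ≠ (⊥ : Finset α) := by
    simp [Finset.insert_ne_empty]
  have h2 : Disjoint (s \ insert a T) (insert a T) := Finset.sdiff_disjoint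
  have h3 : (s \ insert a T) ⊔ insert a T = s := by
    rw [Finset.sup_eq_union, Finset.sdiff_union_of_subset hBs]
  rw [Zp, Finset.mul_sum]
  apply Finset.sum_nbij' (fun π => π.avoid (insert a T)) (fun π' => π'.extend h1 h2 h3)
  · -- maps into univ
    intro π hπ
    exact Finset.mem_univ _
  · -- extend lands in the fiber
    intro π' hπ'
    rw [Finset.mem_filter]
    refine ⟨Finset.mem_univ _, ?_⟩
    have hpart : (π'.extend h1 h2 h3).part a = insert a T := by
      apply Finpartition.part_eq_of_mem
      · rw [Finpartition.extend_parts]; exact Finset.mem_insert_self _ _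
      · exact Finset.mem_insert_self _ _
    rw [hpart, Finset.erase_insert haT]
  · -- left inverse
    intro π hπ
    rw [Finset.mem_filter] at hπ
    have hpart : π.part a = insert a T := by
      rw [← hπ.2, Finset.insert_erase (π.mem_part ha)]
    exact extend_avoid π (hpart ▸ π.part_mem.2 ha) h1 h2 h3
  · -- right inverse
    intro π' hπ'
    exact avoid_extend π' h1 h2 h3
  · -- values agree
    intro π hπ
    rw [Finset.mem_filter] at hπ
    have hpart : π.part a = insert a T := by
      rw [← hπ.2, Finset.insert_erase (π.mem_part ha)]
    have hBparts : insert a T ∈ π.parts := hpart ▸ π.part_mem.2 ha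
    have hparts : π.parts = insert (insert a T) ((π.avoid (insert a T)).parts) := by
      rw [avoid_parts_of_mem π hBparts, Finset.insert_erase hBparts]
    have hnot : insert a T ∉ (π.avoid (insert a T)).parts := by
      rw [avoid_parts_of_mem π hBparts]
      exact Finset.notMem_erase _ _
    have hcard : (insert a T).card = T.card + 1 := Finset.card_insert_of_notMem haT
    rw [hparts, Finset.prod_insert hnot, Finset.card_insert_of_notMem hnot, hcard]
    rw [map_mul, pow_succ]
    push_cast
    ring


section final
variable {α : Type*} [DecidableEq α]

lemma Zp_card (s : Finset α) : Zp s = abelP s.card := by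
  induction s using Finset.strongInduction with
  | _ s ih =>
    rcases Finset.eq_empty_or_nonempty s with rfl | ⟨a, ha⟩
    · simpa [abelP] using Zp_empty
    · have hcard : 1 ≤ s.card := Finset.card_pos.2 ⟨a, ha⟩
      set p := s.card - 1 with hp
      have hpe : (s.erase a).card = p := by rw [Finset.card_erase_of_mem ha]
      have hsc : s.card = p + 1 := by omega
      rw [Zp_rec ha]
      have hterm : ∀ T ∈ (s.erase a).powerset,
          C (((T.card + 1 : ℕ) : ℤ) ^ T.card) * X * Zp (s \ insert a T)
          = C (((T.card + 1 : ℕ) : ℤ) ^ T.card) * X * abelP (p - T.card) := by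
        intro T hT
        rw [Finset.mem_powerset] at hT
        have haT : a ∉ T := fun h => (Finset.mem_erase.1 (hT h)).1 rfl
        have hBs : insert a T ⊆ s := Finset.insert_subset ha (hT.trans (Finset.erase_subset a s))
        have hTcard : T.card ≤ p := hpe ▸ Finset.card_le_card hT
        have hss : s \ insert a T ⊂ s := Finset.sdiff_ssubset hBs (Finset.insert_nonempty a T)
        rw [ih _ hss]
        congr 1
        have harg : #s - (#T + 1) = p - #T := by omega
        rw [Finset.card_sdiff_of_subset hBs, Finset.card_insert_of_notMem haT, harg]

      rw [Finset.sum_congr rfl hterm]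
      have hgroup : ∑ T ∈ (s.erase a).powerset,
            C (((T.card + 1 : ℕ) : ℤ) ^ T.card) * X * abelP (p - T.card)
          = ∑ j ∈ range (p + 1), p.choose j •
              (C (((j + 1 : ℕ) : ℤ) ^ j) * X * abelP (p - j)) := by
        rw [Finset.sum_powerset, hpe]
        apply Finset.sum_congr rfl
        intro j hj
        rw [Finset.sum_powersetCard j (s.erase a) (fun m => C (((m + 1 : ℕ) : ℤ) ^ m) * X * abelP (p - m)), hpe]
      rw [hgroup, hsc, abelP_rec p]
      apply Finset.sum_congr rfl
      intro j hj
      rw [nsmul_eq_mul]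

/-- The zeta-type enumerator with weights `w(m) = m^{m-1}` (the number of rooted trees on
`m` labeled vertices) is the `n`-th Abel polynomial `x (x + n)^{n-1}`, as an identity of
polynomials with integer coefficients. -/
theorem zeta_enumerator_abel (n : ℕ) (hn : 1 ≤ n) :
    ∑ π : Finpartition (univ : Finset (Fin n)),
        C (∏ B ∈ π.parts, (B.card : ℤ) ^ (B.card - 1)) * X ^ π.parts.card
      = X * (X + (n : Polynomial ℤ)) ^ (n - 1) := by
  have h := Zp_card (univ : Finset (Fin n))
  rw [Zp] at h
  rw [h, Finset.card_univ, Fintype.card_fin]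
  rcases n with _ | m
  · omega
  · show abelP (m + 1) = X * (X + ((m + 1 : ℕ) : Polynomial ℤ)) ^ (m + 1 - 1)
    rw [show abelP (m+1) = X * (X + ((m:Polynomial ℤ) + 1))^m from rfl]
    push_cast
    ring
end final
end

section
/- Let (p_n)_{n ≥ 0} be any sequence of polynomials over a commutative ring R and (z_i)_{i ≥ 0} elements of R. Define t_0(0;−Z) = 1 and, for n ≥ 1, t_n(0;−Z) = −Σ_{i=0}^{n−1} C(n,i) · p_{n−i}(−z_i) · t_i(0;−Z). Then for every n ≥ 1, t_n(0;−Z) = Σ_{ρ} (−1)^{|ρ|} · ∏_{i=1}^{k} p_{b_i}(−z_{s_{i−1}}), where the sum runs over all ordered partitions ρ = (B_1,…,B_k) of {1,…,n} (ordered lists of pairwise disjoint nonempty subsets whose union is {1,…,n}), |ρ| = k, b_i = |B_i|, s_0 = 0 and s_i = b_1 + ⋯ + b_i. (Theorem 4.5.) -/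
open Finset

variable {R : Type*} [CommRing R]

/-- The constant terms `t_n(0; -Z)` of the Gončarov polynomials, defined by
`t_0(0; -Z) = 1` and `t_n(0; -Z) = -∑_{i=0}^{n-1} C(n,i) p_{n-i}(-z_i) t_i(0; -Z)`. -/
noncomputable def tcoef (p : ℕ → Polynomial R) (z : ℕ → R) (n : ℕ) : R :=
  if n = 0 then 1
  else -∑ i ∈ (Finset.range n).attach,
    (n.choose i.1 : R) * (p (n - i.1)).eval (-(z i.1)) * tcoef p z i.1
termination_by n
decreasing_by exact Finset.mem_range.mp i.2

section Aux
variable (p : ℕ → Polynomial R) (z : ℕ → R)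

def fib {α : Type*} [Fintype α] {k : ℕ} (c : α → Fin k) (i : Fin k) : ℕ :=
  (Finset.univ.filter fun m => c m = i).card

noncomputable def wt {α : Type*} [Fintype α] {k : ℕ} (c : α → Fin k) : R :=
  (-1 : R) ^ k * ∏ i : Fin k,
    (p (fib c i)).eval (-(z (∑ j ∈ Finset.univ.filter fun j : Fin k => j < i, fib c j)))

noncomputable def S (α : Type*) [Fintype α] [DecidableEq α] (k : ℕ) : R :=
  ∑ c ∈ (Finset.univ : Finset (α → Fin k)).filter Function.Surjective, wt p z c

noncomputable def G (α : Type*) [Fintype α] [DecidableEq α] (N : ℕ) : R :=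
  ∑ k ∈ Finset.range N, S p z α k

lemma fib_comp {α β : Type*} [Fintype α] [Fintype β] (e : β ≃ α) {k : ℕ} (c : α → Fin k)
    (i : Fin k) : fib (c ∘ e) i = fib c i := by
  simp only [fib, ← Fintype.card_subtype]
  exact Fintype.card_congr (e.subtypeEquiv fun b => Iff.rfl)

lemma wt_comp {α β : Type*} [Fintype α] [Fintype β] (e : β ≃ α) {k : ℕ} (c : α → Fin k) :
    wt p z (c ∘ e) = wt p z c := by
  simp only [wt, fib_comp]

lemma S_comp {α β : Type*} [Fintype α] [Fintype β] [DecidableEq α] [DecidableEq β]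
    (e : β ≃ α) (k : ℕ) : S p z β k = S p z α k := by
  refine Finset.sum_nbij' (fun c => c ∘ e.symm) (fun d => d ∘ e) ?_ ?_ ?_ ?_ ?_
  · intro c hc
    simp only [mem_filter, mem_univ, true_and] at hc ⊢
    exact hc.comp e.symm.surjective
  · intro d hd
    simp only [mem_filter, mem_univ, true_and] at hd ⊢
    exact hd.comp e.surjective
  · intro c _; funext x; simp
  · intro d _; funext x; simp
  · intro c _
    have h : (c ∘ e.symm) ∘ e = c := by funext x; simp
    rw [← wt_comp p z e (c ∘ e.symm), h]

lemma S_eq_zero {α : Type*} [Fintype α] [DecidableEq α] {k : ℕ} (h : Fintype.card α < k) :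
    S p z α k = 0 := by
  have he : (Finset.univ : Finset (α → Fin k)).filter Function.Surjective = ∅ := by
    rw [Finset.filter_eq_empty_iff]
    intro c _ hc
    have := Fintype.card_le_of_surjective c hc
    simp only [Fintype.card_fin] at this
    omega
  rw [S, he, sum_empty]

lemma G_congr {α β : Type*} [Fintype α] [Fintype β] [DecidableEq α] [DecidableEq β]
    (e : β ≃ α) (N : ℕ) : G p z β N = G p z α N :=
  Finset.sum_congr rfl fun k _ => S_comp p z e k

lemma G_eq {α : Type*} [Fintype α] [DecidableEq α] {N : ℕ} (h : Fintype.card α + 1 ≤ N) :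
    G p z α N = G p z α (Fintype.card α + 1) :=
  (Finset.sum_subset (Finset.range_subset_range.mpr h) (fun k _ hk =>
    S_eq_zero p z (by simp only [mem_range, not_lt] at hk; omega))).symm

def restr {α : Type*} [Fintype α] [DecidableEq α] {k : ℕ} (A : Finset α) (c : α → Fin (k+1))
    (hc : ∀ m, c m = Fin.last k ↔ m ∈ A) (x : ↥(Aᶜ)) : Fin k :=
  (c x.1).castPred (fun h => Finset.mem_compl.mp x.2 ((hc x.1).mp h))

lemma fib_restr {α : Type*} [Fintype α] [DecidableEq α] {k : ℕ} (A : Finset α)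
    (c : α → Fin (k+1)) (hc : ∀ m, c m = Fin.last k ↔ m ∈ A) (j' : Fin k) :
    fib c (Fin.castSucc j') = fib (restr A c hc) j' := by
  unfold fib
  refine Finset.card_bij' (fun m hm => (⟨m, ?_⟩ : ↥(Aᶜ))) (fun x _ => x.1) ?_ ?_ ?_ ?_
  · have hm' := (Finset.mem_filter.mp hm).2
    refine Finset.mem_compl.mpr fun hmA => ?_
    exact absurd (((hc m).mpr hmA).symm.trans hm') (Fin.ne_of_lt (Fin.castSucc_lt_last j')).symm
  · intro m hm
    have hm' := (Finset.mem_filter.mp hm).2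
    simp only [Finset.mem_filter, Finset.mem_univ, true_and]
    apply Fin.castSucc_injective
    rw [restr, Fin.castSucc_castPred, hm']
  · intro x hx
    have hx' := (Finset.mem_filter.mp hx).2
    simp only [Finset.mem_filter, Finset.mem_univ, true_and]
    rw [← hx', restr, Fin.castSucc_castPred]
  · intro m _; rfl
  · intro x _; rfl

lemma psum_restr {α : Type*} [Fintype α] [DecidableEq α] {k : ℕ} (A : Finset α)
    (c : α → Fin (k+1)) (hc : ∀ m, c m = Fin.last k ↔ m ∈ A) (j' : Fin k) :
    ∑ u ∈ Finset.univ.filter (fun u : Fin (k+1) => u < Fin.castSucc j'), fib c u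
      = ∑ v ∈ Finset.univ.filter (fun v : Fin k => v < j'), fib (restr A c hc) v := by
  refine Finset.sum_bij' (fun u hu => u.castPred ?_) (fun v _ => v.castSucc) ?_ ?_ ?_ ?_ ?_
  · exact Fin.ne_last_of_lt (Finset.mem_filter.mp hu).2
  · intro u hu
    simp only [Finset.mem_filter, Finset.mem_univ, true_and] at hu ⊢
    rwa [Fin.castPred_lt_iff]
  · intro v hv
    simp only [Finset.mem_filter, Finset.mem_univ, true_and] at hv ⊢
    rwa [Fin.castSucc_lt_castSucc_iff]
  · intro u hu; exact Fin.castSucc_castPred _ _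
  · intro v hv; exact Fin.castPred_castSucc
  · intro u hu
    rw [← fib_restr A c hc]
    congr 1

lemma sum_fib {α : Type*} [Fintype α] {k : ℕ} (c : α → Fin k) :
    ∑ i : Fin k, fib c i = Fintype.card α := by
  rw [← Finset.card_univ]
  exact (Finset.card_eq_sum_card_fiberwise fun m _ => Finset.mem_univ (c m)).symm

lemma psum_last {α : Type*} [Fintype α] [DecidableEq α] {k : ℕ} (A : Finset α)
    (c : α → Fin (k+1)) (hfib : Finset.univ.filter (fun m => c m = Fin.last k) = A) :
    ∑ u ∈ Finset.univ.filter (fun u : Fin (k+1) => u < Fin.last k), fib c u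
      = Fintype.card α - A.card := by
  have h1 : Finset.univ.filter (fun u : Fin (k+1) => u < Fin.last k)
      = Finset.univ.erase (Fin.last k) := by
    ext u; simp [Fin.lt_last_iff_ne_last]
  have h2 := Finset.sum_erase_add Finset.univ (fib c) (Finset.mem_univ (Fin.last k))
  have h3 : fib c (Fin.last k) = A.card := by rw [fib, hfib]
  have h4 := sum_fib c
  rw [h1]; omega

lemma wt_restr (p : ℕ → Polynomial R) (z : ℕ → R) {α : Type*} [Fintype α] [DecidableEq α]
    {k : ℕ} (A : Finset α) (c : α → Fin (k+1))
    (hfib : Finset.univ.filter (fun m => c m = Fin.last k) = A)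
    (hc : ∀ m, c m = Fin.last k ↔ m ∈ A) :
    wt p z c = -(p A.card).eval (-(z (Fintype.card α - A.card))) * wt p z (restr A c hc) := by
  rw [wt, wt, Fin.prod_univ_castSucc]
  have hfibl : fib c (Fin.last k) = A.card := by rw [fib, hfib]
  have hps := psum_last A c hfib
  have hprod : ∏ i : Fin k, (p (fib c (Fin.castSucc i))).eval
        (-(z (∑ j ∈ Finset.univ.filter fun j : Fin (k+1) => j < Fin.castSucc i, fib c j)))
      = ∏ i : Fin k, (p (fib (restr A c hc) i)).eval
        (-(z (∑ j ∈ Finset.univ.filter fun j : Fin k => j < i, fib (restr A c hc) j))) := by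
    refine Finset.prod_congr rfl fun i _ => ?_
    rw [fib_restr A c hc i, psum_restr A c hc i]
  rw [hprod, hfibl, hps, pow_succ]
  ring

lemma step_last (p : ℕ → Polynomial R) (z : ℕ → R) {α : Type*} [Fintype α] [DecidableEq α]
    (k : ℕ) (A : Finset α) (hA : A.Nonempty) :
    ∑ c ∈ ((Finset.univ : Finset (α → Fin (k+1))).filter Function.Surjective).filter
        (fun c => Finset.univ.filter (fun m => c m = Fin.last k) = A),
      wt p z c
    = -(p A.card).eval (-(z (Fintype.card α - A.card))) * S p z (↥(Aᶜ)) k := by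
  rw [S, Finset.mul_sum]
  have hmem : ∀ c : α → Fin (k+1),
      c ∈ ((Finset.univ : Finset (α → Fin (k+1))).filter Function.Surjective).filter
        (fun c => Finset.univ.filter (fun m => c m = Fin.last k) = A) →
      ∀ m, c m = Fin.last k ↔ m ∈ A := by
    intro c hc m
    have := (Finset.mem_filter.mp hc).2
    rw [← this]
    simp
  refine Finset.sum_bij' (fun c hc => restr A c (hmem c hc))
    (fun c' _ => fun m : α => if h : m ∈ A then Fin.last k
      else Fin.castSucc (c' ⟨m, Finset.mem_compl.mpr h⟩)) ?_ ?_ ?_ ?_ ?_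
  · -- hi : restr is surjective
    intro c hc
    simp only [Finset.mem_filter, Finset.mem_univ, true_and]
    have hsurj := (Finset.mem_filter.mp (Finset.mem_filter.mp hc).1).2
    intro j'
    obtain ⟨m, hm⟩ := hsurj (Fin.castSucc j')
    have hmA : m ∉ A := fun h =>
      absurd (((hmem c hc m).mpr h).symm.trans hm)
        (Fin.ne_of_lt (Fin.castSucc_lt_last j')).symm
    refine ⟨⟨m, Finset.mem_compl.mpr hmA⟩, ?_⟩
    apply Fin.castSucc_injective
    rw [restr, Fin.castSucc_castPred, hm]
  · -- hj : the extension lies in the double filter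
    intro c' hc'
    have hsurj' := (Finset.mem_filter.mp hc').2
    simp only [Finset.mem_filter, Finset.mem_univ, true_and]
    constructor
    · intro u
      induction u using Fin.lastCases with
      | last =>
        obtain ⟨a, ha⟩ := hA
        exact ⟨a, by simp [ha]⟩
      | cast j' =>
        obtain ⟨x, hx⟩ := hsurj' j'
        refine ⟨x.1, ?_⟩
        have hxA : x.1 ∉ A := Finset.mem_compl.mp x.2
        dsimp only
        rw [dif_neg hxA]
        congr
    · ext m
      by_cases h : m ∈ A
      · simp [h]
      · simp [h, (Fin.ne_of_lt (Fin.castSucc_lt_last _))]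
  · -- left_inv
    intro c hc
    funext m
    by_cases h : m ∈ A
    · rw [dif_pos h]
      exact ((hmem c hc m).mpr h).symm
    · rw [dif_neg h, restr, Fin.castSucc_castPred]
  · -- right_inv
    intro c' hc'
    funext x
    have hxA : x.1 ∉ A := Finset.mem_compl.mp x.2
    apply Fin.castSucc_injective
    rw [restr, Fin.castSucc_castPred, dif_neg hxA]
  · -- weights
    intro c hc
    exact wt_restr p z A c (Finset.mem_filter.mp hc).2 (hmem c hc)

lemma G_rec (p : ℕ → Polynomial R) (z : ℕ → R) (α : Type*) [Fintype α] [DecidableEq α]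
    [Nonempty α] :
    G p z α (Fintype.card α + 1)
      = -∑ i ∈ Finset.range (Fintype.card α),
          ((Fintype.card α).choose i : R) * (p (Fintype.card α - i)).eval (-(z i)) *
            G p z (Fin i) (i + 1) := by
  have hn1 : 1 ≤ Fintype.card α := Fintype.card_pos
  set n := Fintype.card α with hn
  rw [G, Finset.sum_range_succ']
  have hS0 : S p z α 0 = 0 := by
    have : IsEmpty (α → Fin 0) := ⟨fun f => (f (Classical.arbitrary α)).elim0⟩
    rw [S, Finset.univ_eq_empty, Finset.filter_empty, Finset.sum_empty]
  rw [hS0, add_zero]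
  have hB : ∀ k' : ℕ, S p z α (k'+1)
      = ∑ A ∈ (Finset.univ : Finset α).powerset,
          ∑ c ∈ ((Finset.univ : Finset (α → Fin (k'+1))).filter Function.Surjective).filter
            (fun c => Finset.univ.filter (fun m => c m = Fin.last k') = A), wt p z c := by
    intro k'
    rw [S]
    exact (Finset.sum_fiberwise_of_maps_to
      (fun c _ => Finset.mem_powerset.mpr (Finset.subset_univ _)) _).symm
  calc ∑ k' ∈ Finset.range n, S p z α (k'+1)
      = ∑ A ∈ (Finset.univ : Finset α).powerset, ∑ k' ∈ Finset.range n,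
          ∑ c ∈ ((Finset.univ : Finset (α → Fin (k'+1))).filter Function.Surjective).filter
            (fun c => Finset.univ.filter (fun m => c m = Fin.last k') = A), wt p z c := by
        simp_rw [hB]
        exact Finset.sum_comm
    _ = ∑ A ∈ (Finset.univ : Finset α).powerset,
          (if A = ∅ then 0 else -(p A.card).eval (-(z (n - A.card))) *
            G p z (Fin (n - A.card)) (n - A.card + 1)) := by
        refine Finset.sum_congr rfl fun A _ => ?_
        by_cases hA : A = ∅
        · subst hA
          rw [if_pos rfl]
          refine Finset.sum_eq_zero fun k' _ => ?_
          convert Finset.sum_empty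
          rw [Finset.filter_eq_empty_iff]
          intro c hc hfib
          have hsurj := (Finset.mem_filter.mp hc).2
          obtain ⟨m, hm⟩ := hsurj (Fin.last k')
          have hmem : m ∈ Finset.univ.filter (fun m => c m = Fin.last k') := by simp [hm]
          rw [hfib] at hmem
          exact absurd hmem (Finset.notMem_empty m)
        · rw [if_neg hA]
          have hAne : A.Nonempty := Finset.nonempty_iff_ne_empty.mpr hA
          have hcard : Fintype.card (↥(Aᶜ)) = n - A.card := by
            rw [Fintype.card_coe, Finset.card_compl]
          have hc1 : 1 ≤ A.card := Finset.card_pos.mpr hAne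
          have hc2 : A.card ≤ n := Finset.card_le_univ A
          calc ∑ k' ∈ Finset.range n,
                ∑ c ∈ ((Finset.univ : Finset (α → Fin (k'+1))).filter Function.Surjective).filter
                  (fun c => Finset.univ.filter (fun m => c m = Fin.last k') = A), wt p z c
              = ∑ k' ∈ Finset.range n,
                  -(p A.card).eval (-(z (n - A.card))) * S p z (↥(Aᶜ)) k' := by
                refine Finset.sum_congr rfl fun k' _ => ?_
                rw [step_last p z k' A hAne]
            _ = -(p A.card).eval (-(z (n - A.card))) * G p z (↥(Aᶜ)) n := by
                rw [G, ← Finset.mul_sum]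
            _ = -(p A.card).eval (-(z (n - A.card))) *
                  G p z (Fin (n - A.card)) (n - A.card + 1) := by
                congr 1
                have e : ↥(Aᶜ) ≃ Fin (n - A.card) :=
                  (Aᶜ).equivFin.trans (finCongr (by rw [Finset.card_compl]))
                rw [G_congr p z e n, G_eq p z (by simp only [Fintype.card_fin]; omega)]
                simp
    _ = ∑ m ∈ Finset.range (n + 1), (n.choose m : R) *
          (if m = 0 then 0 else -(p m).eval (-(z (n - m))) *
            G p z (Fin (n - m)) (n - m + 1)) := by
        rw [Finset.powerset_card_disjiUnion]
        refine (Finset.sum_disjiUnion _ _ _).trans ?_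
        rw [Finset.card_univ]
        refine Finset.sum_congr rfl fun m hm => ?_
        by_cases hm0 : m = 0
        · subst hm0
          rw [Finset.powersetCard_zero, Finset.sum_singleton, if_pos rfl, if_pos rfl, mul_zero]
        · rw [if_neg hm0]
          have : ∀ A ∈ Finset.powersetCard m (Finset.univ : Finset α),
              (if A = ∅ then (0:R) else -(p A.card).eval (-(z (n - A.card))) *
                G p z (Fin (n - A.card)) (n - A.card + 1))
              = -(p m).eval (-(z (n - m))) * G p z (Fin (n - m)) (n - m + 1) := by
            intro A hA
            have hAc : A.card = m := (Finset.mem_powersetCard.mp hA).2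
            have hAne : A ≠ ∅ := by
              intro h; subst h; simp at hAc; omega
            rw [if_neg hAne, hAc]
          rw [Finset.sum_congr rfl this, Finset.sum_const, Finset.card_powersetCard,
            Finset.card_univ, nsmul_eq_mul]
    _ = -∑ i ∈ Finset.range n, (n.choose i : R) * (p (n - i)).eval (-(z i)) *
          G p z (Fin i) (i + 1) := by
        rw [Finset.sum_range_succ', ← Finset.sum_range_reflect
          (fun i => (n.choose i : R) * (p (n - i)).eval (-(z i)) * G p z (Fin i) (i + 1)) n]
        rw [← Finset.sum_neg_distrib]
        simp only [if_true, eq_self_iff_true, mul_zero, Nat.cast_one, one_mul, add_zero]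
        refine Finset.sum_congr rfl fun m' hm' => ?_
        have hm'n : m' < n := Finset.mem_range.mp hm'
        have h1 : n - 1 - m' = n - (m' + 1) := by omega
        have h2 : n - (n - (m' + 1)) = m' + 1 := by omega
        have h3 : n.choose (n - (m' + 1)) = n.choose (m' + 1) := Nat.choose_symm (by omega)
        rw [if_neg (Nat.succ_ne_zero m'), h1, h2, h3]
        ring

lemma G_fin (p : ℕ → Polynomial R) (z : ℕ → R) : ∀ n : ℕ, G p z (Fin n) (n+1) = tcoef p z n := by
  intro n
  induction n using Nat.strong_induction_on with
  | _ n ih =>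
    rcases Nat.eq_zero_or_pos n with h0 | h1
    · subst h0
      rw [tcoef, if_pos rfl, G, Finset.sum_range_one, S]
      have hsurj : ∀ c : Fin 0 → Fin 0, Function.Surjective c := fun c b => b.elim0
      rw [Finset.filter_true_of_mem (fun c _ => hsurj c)]
      have : (Finset.univ : Finset (Fin 0 → Fin 0)) = {fun x => x.elim0} := by
        apply Finset.eq_singleton_iff_unique_mem.mpr
        exact ⟨Finset.mem_univ _, fun c _ => funext fun x => x.elim0⟩
      rw [this, Finset.sum_singleton, wt]
      simp
    · have hne : Nonempty (Fin n) := ⟨⟨0, h1⟩⟩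
      have hrec := G_rec p z (Fin n)
      simp only [Fintype.card_fin] at hrec
      rw [hrec, tcoef, if_neg (by omega)]
      congr 1
      rw [Finset.sum_attach (Finset.range n)
        (fun i => (n.choose i : R) * (p (n - i)).eval (-(z i)) * tcoef p z i)]
      refine Finset.sum_congr rfl fun i hi => ?_
      rw [ih i (Finset.mem_range.mp hi)]


end Aux

/-- Theorem 4.5:  `t_n(0; -Z) = ∑_ρ (-1)^{|ρ|} ∏_{i=1}^{k} p_{b_i}(-z_{s_{i-1}})`, the sum
over all ordered partitions `ρ = (B_1, …, B_k)` of `{1, …, n}`.  An ordered partition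
into `k` (nonempty, pairwise disjoint, exhaustive) blocks is encoded by the surjection
`c : Fin n → Fin k` with `B_{i+1} = c⁻¹(i)`; then `b_{i+1} = |c⁻¹(i)|` and
`s_i = ∑_{j < i} |c⁻¹(j)|`. -/
theorem tcoef_ordered_partitions (p : ℕ → Polynomial R) (z : ℕ → R) (n : ℕ) (hn : 1 ≤ n) :
    tcoef p z n
      = ∑ k ∈ Finset.range (n + 1),
          ∑ c ∈ (Finset.univ : Finset (Fin n → Fin k)).filter Function.Surjective,
            (-1 : R) ^ k *
              ∏ i : Fin k,
                (p ((Finset.univ.filter fun m => c m = i).card)).eval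
                  (-(z (∑ j ∈ Finset.univ.filter fun j : Fin k => j < i,
                      (Finset.univ.filter fun m => c m = j).card))) := by
  rw [← G_fin p z n]
  rfl
end
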